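/- arXiv:2012.06327 — 4 statements merged into one kernel-verified Lean document; each statement's English description precedes it below -/
import Mathlib

section
/- Let K_3^- be the 2-colored graph on vertex set {1,2,3} with red edges {12, 13, 23} and blue edges {12, 13}. Then π_n(K_3^-) → 3/2 as n → ∞, i.e., π(K_3^-) = 3/2. -/
open Finset Filter

structure ColGraph (k r n : ℕ) where
  E : Fin k → Finset (Finset (Fin n))
  card_mem : ∀ i : Fin k, ∀ e ∈ E i, e.card = r

namespace ColGraph

def IsSubgraph {k r m n : ℕ} (H : ColGraph k r m) (G : ColGraph k r n) : Prop :=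
  ∃ f : Fin m → Fin n, Function.Injective f ∧
    ∀ i : Fin k, ∀ e ∈ H.E i, e.image f ∈ G.E i

noncomputable def density {k r n : ℕ} (G : ColGraph k r n) : ℝ :=
  (∑ i : Fin k, ((G.E i).card : ℝ)) / (n.choose r : ℝ)

noncomputable def turanDensityN {k r m : ℕ} (H : ColGraph k r m) (n : ℕ) : ℝ :=
  sSup {x : ℝ | ∃ G : ColGraph k r n, ¬ H.IsSubgraph G ∧ G.density = x}

def IsHom {k r m p : ℕ} (G : ColGraph k r m) (H : ColGraph k r p) (f : Fin m → Fin p) : Prop :=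
  ∀ i : Fin k, ∀ e ∈ G.E i, Set.InjOn f ↑e ∧ e.image f ∈ H.E i

def Colorable {k r m p : ℕ} (G : ColGraph k r m) (H : ColGraph k r p) : Prop :=
  ∃ f : Fin m → Fin p, G.IsHom H f

def blowUp {k r m : ℕ} (H : ColGraph k r m) (s : ℕ) : ColGraph k r (m * s) where
  E i := Finset.univ.filter (fun e : Finset (Fin (m * s)) =>
    e.card = r ∧ e.image (fun x => (finProdFinEquiv.symm x).1) ∈ H.E i)
  card_mem i e he := (Finset.mem_filter.mp he).2.1

end ColGraph

noncomputable def famTuranDensityN {k r : ℕ} {ι : Type*} {v : ι → ℕ}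
    (Hs : ∀ i, ColGraph k r (v i)) (n : ℕ) : ℝ :=
  sSup {x : ℝ | ∃ G : ColGraph k r n, (∀ i, ¬ (Hs i).IsSubgraph G) ∧ G.density = x}

def prodGraph {m p : ℕ} (G₁ : ColGraph 2 2 m) (G₂ : ColGraph 2 2 p) : ColGraph 2 2 (m * p) where
  E i := Finset.univ.filter (fun e : Finset (Fin (m * p)) =>
    e.card = 2 ∧ e.image (fun x => (finProdFinEquiv.symm x).1) ∈ G₁.E i ∧
      e.image (fun x => (finProdFinEquiv.symm x).2) ∈ G₂.E i)
  card_mem i e he := (Finset.mem_filter.mp he).2.1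

def IsBipartite {n : ℕ} (G : ColGraph 2 2 n) : Prop :=
  ∀ i : Fin 2, ∃ part : Fin n → Bool, ∀ e ∈ G.E i, ∃ u ∈ e, ∃ v ∈ e, part u ≠ part v

def mk2 {n : ℕ} (R B : Finset (Finset (Fin n)))
    (hR : ∀ e ∈ R, e.card = 2) (hB : ∀ e ∈ B, e.card = 2) : ColGraph 2 2 n where
  E := fun i => if i = 0 then R else B
  card_mem := by
    intro i e he
    split at he
    · exact hR e he
    · exact hB e he

def Tgraph : ColGraph 2 2 4 :=
  mk2 {{0,1},{0,2},{2,3}} {{0,1},{1,2},{2,3}} (by decide) (by decide)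

def K3 : ColGraph 2 2 3 :=
  mk2 {{0,1},{0,2},{1,2}} {{0,1},{0,2},{1,2}} (by decide) (by decide)

def K3minus : ColGraph 2 2 3 :=
  mk2 {{0,1},{0,2},{1,2}} {{0,1},{0,2}} (by decide) (by decide)

def T1 : ColGraph 2 2 4 :=
  mk2 {{0,1},{2,3},{0,2},{1,3}} {{0,1},{2,3},{0,3},{1,2}} (by decide) (by decide)

def T2 : ColGraph 2 2 4 :=
  mk2 {{0,1},{0,3},{1,2},{1,3},{2,3}} {{0,1},{0,2},{0,3},{1,2},{2,3}} (by decide) (by decide)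

set_option maxRecDepth 40000 in
def H8 : ColGraph 2 2 8 :=
  mk2 {{0,1},{0,2},{1,3},{2,3},{0,5},{2,6},{3,7},{1,4},{2,4},{0,7},{3,5},{1,6}}
      {{4,5},{4,6},{5,7},{6,7},{1,5},{0,4},{3,6},{2,7},{2,4},{0,7},{3,5},{1,6}}
      (by decide) (by decide)

structure Graph23 (n : ℕ) where
  E2 : Finset (Finset (Fin n))
  E3 : Finset (Finset (Fin n))
  card2 : ∀ e ∈ E2, e.card = 2
  card3 : ∀ e ∈ E3, e.card = 3

namespace Graph23

noncomputable def density {n : ℕ} (G : Graph23 n) : ℝ :=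
  (G.E2.card : ℝ) / (n.choose 2 : ℝ) + (G.E3.card : ℝ) / (n.choose 3 : ℝ)

def IsSubgraph {m n : ℕ} (H : Graph23 m) (G : Graph23 n) : Prop :=
  ∃ f : Fin m → Fin n, Function.Injective f ∧
    (∀ e ∈ H.E2, e.image f ∈ G.E2) ∧ (∀ e ∈ H.E3, e.image f ∈ G.E3)

noncomputable def turanDensityN {m : ℕ} (H : Graph23 m) (n : ℕ) : ℝ :=
  sSup {x : ℝ | ∃ G : Graph23 n, ¬ H.IsSubgraph G ∧ G.density = x}

end Graph23

def lift23 {m : ℕ} (H : ColGraph 2 2 m) : Graph23 (m + 1) where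
  E2 := (H.E 0).image (fun e => e.image Fin.castSucc)
  E3 := (H.E 1).image (fun e => insert (Fin.last m) (e.image Fin.castSucc))
  card2 := by
    intro e he
    simp only [Finset.mem_image] at he
    obtain ⟨e0, he0, rfl⟩ := he
    rw [Finset.card_image_of_injective _ (Fin.castSucc_injective m)]
    exact H.card_mem 0 e0 he0
  card3 := by
    intro e he
    simp only [Finset.mem_image] at he
    obtain ⟨e0, he0, rfl⟩ := he
    rw [Finset.card_insert_of_notMem (by
      intro h
      simp only [Finset.mem_image] at h
      obtain ⟨x, _, hx⟩ := h
      exact (Fin.castSucc_lt_last x).ne hx)]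
    rw [Finset.card_image_of_injective _ (Fin.castSucc_injective m), H.card_mem 1 e0 he0]

def H5 : Graph23 5 where
  E2 := {{0,1},{0,2},{2,3}}
  E3 := {{0,1,4},{0,2,4},{2,3,4}}
  card2 := by decide
  card3 := by decide


def dg {n : ℕ} (S : Finset (Finset (Fin n))) (v : Fin n) : ℕ :=
  (S.filter (fun e => v ∈ e)).card

lemma sum_over_edges {n : ℕ} (S : Finset (Finset (Fin n))) (f : Fin n → ℕ) :
    ∑ e ∈ S, ∑ v ∈ e, f v = ∑ v : Fin n, dg S v * f v := by
  have h1 : ∀ e ∈ S, ∑ v ∈ e, f v = ∑ v : Fin n, if v ∈ e then f v else 0 := by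
    intro e he
    rw [Finset.sum_ite_mem]
    congr 1
    simp [Finset.inter_eq_right.mpr (Finset.subset_univ e)]
  rw [Finset.sum_congr rfl h1, Finset.sum_comm]
  refine Finset.sum_congr rfl fun v _ => ?_
  rw [Finset.sum_ite, Finset.sum_const_zero, add_zero, Finset.sum_const, dg, smul_eq_mul]

lemma deg_eq_card_nbhd {n : ℕ} (S : Finset (Finset (Fin n)))
    (h2 : ∀ e ∈ S, e.card = 2) (a : Fin n) :
    dg S a = (univ.filter (fun w : Fin n => w ≠ a ∧ {a, w} ∈ S)).card := by
  symm
  apply Finset.card_bij (fun w _ => ({a, w} : Finset (Fin n)))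
  · intro w hw
    simp only [Finset.mem_filter, Finset.mem_univ, true_and] at hw ⊢
    exact ⟨hw.2, Finset.mem_insert_self a _⟩
  · intro w1 hw1 w2 hw2 heq
    simp only [Finset.mem_filter, Finset.mem_univ, true_and] at hw1 hw2
    have : w1 ∈ ({a, w2} : Finset (Fin n)) := heq ▸ Finset.mem_insert_of_mem (Finset.mem_singleton_self w1)
    rcases Finset.mem_insert.mp this with h | h
    · exact absurd h hw1.1
    · exact Finset.mem_singleton.mp h
  · intro e he
    simp only [Finset.mem_filter] at he
    obtain ⟨x, y, hxy, rfl⟩ := Finset.card_eq_two.mp (h2 e he.1)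
    rcases Finset.mem_insert.mp he.2 with rfl | h
    · refine ⟨y, ?_, rfl⟩
      simp only [Finset.mem_filter, Finset.mem_univ, true_and]
      exact ⟨hxy.symm, he.1⟩
    · have hy : a = y := Finset.mem_singleton.mp h
      subst hy
      refine ⟨x, ?_, ?_⟩
      · simp only [Finset.mem_filter, Finset.mem_univ, true_and]
        rw [Finset.pair_comm]
        exact ⟨hxy, he.1⟩
      · rw [Finset.pair_comm]

lemma mantel {n : ℕ} (S : Finset (Finset (Fin n)))
    (h2 : ∀ e ∈ S, e.card = 2)
    (htf : ∀ a b c : Fin n, {a, b} ∈ S → {a, c} ∈ S → {b, c} ∈ S → False) :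
    4 * S.card ≤ n ^ 2 := by
  -- local bound: for e ∈ S, sum of degrees over e ≤ n
  have hloc : ∀ e ∈ S, ∑ v ∈ e, dg S v ≤ n := by
    intro e he
    obtain ⟨a, b, hab, rfl⟩ := Finset.card_eq_two.mp (h2 e he)
    rw [Finset.sum_pair hab, deg_eq_card_nbhd S h2 a, deg_eq_card_nbhd S h2 b]
    have hdisj : Disjoint (univ.filter (fun w : Fin n => w ≠ a ∧ {a, w} ∈ S))
        (univ.filter (fun w : Fin n => w ≠ b ∧ {b, w} ∈ S)) := by
      rw [Finset.disjoint_filter]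
      rintro w _ ⟨hwa, hawS⟩ ⟨hwb, hbwS⟩
      exact htf a b w he hawS hbwS
    calc _ = ((univ.filter (fun w : Fin n => w ≠ a ∧ {a, w} ∈ S)) ∪
        (univ.filter (fun w : Fin n => w ≠ b ∧ {b, w} ∈ S))).card :=
          (Finset.card_union_of_disjoint hdisj).symm
      _ ≤ (univ : Finset (Fin n)).card := Finset.card_le_card (Finset.subset_univ _)
      _ = n := Finset.card_univ.trans (Fintype.card_fin n)
  -- sum of squares of degrees ≤ n * |S|
  have hsq : ∑ v : Fin n, dg S v * dg S v ≤ n * S.card := by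
    rw [← sum_over_edges S (dg S)]
    calc ∑ e ∈ S, ∑ v ∈ e, dg S v ≤ ∑ _e ∈ S, n := Finset.sum_le_sum hloc
      _ = S.card * n := by rw [Finset.sum_const, smul_eq_mul]
      _ = n * S.card := Nat.mul_comm _ _
  -- sum of degrees = 2 |S|
  have hdegsum : ∑ v : Fin n, dg S v = 2 * S.card := by
    have := sum_over_edges S (fun _ => 1)
    simp only [mul_one] at this
    rw [← this]
    rw [Finset.sum_congr rfl (fun e he => by rw [Finset.sum_const, smul_eq_mul, mul_one, h2 e he]),
      Finset.sum_const, smul_eq_mul, Nat.mul_comm]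
  -- Cauchy-Schwarz over the reals
  have hCS : ((2 * S.card : ℕ) : ℝ) ^ 2 ≤ (n : ℝ) * ((n : ℝ) * S.card) := by
    have h1 : ((∑ v : Fin n, dg S v : ℕ) : ℝ) ^ 2 ≤
        (n : ℝ) * ∑ v : Fin n, ((dg S v : ℝ)) ^ 2 := by
      have := sq_sum_le_card_mul_sum_sq (s := (univ : Finset (Fin n)))
        (f := fun v => (dg S v : ℝ))
      simpa using this
    rw [hdegsum] at h1
    refine h1.trans ?_
    have h2' : ∑ v : Fin n, ((dg S v : ℝ)) ^ 2 ≤ (n : ℝ) * S.card := by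
      have := hsq
      calc ∑ v : Fin n, ((dg S v : ℝ)) ^ 2
          = ((∑ v : Fin n, dg S v * dg S v : ℕ) : ℝ) := by push_cast [sq]; rfl
        _ ≤ ((n * S.card : ℕ) : ℝ) := by exact_mod_cast this
        _ = (n : ℝ) * S.card := by push_cast; ring
    nlinarith [h2', sq_nonneg ((n:ℝ))]
  have hnat : 4 * S.card * S.card ≤ n ^ 2 * S.card := by
    have : ((4 * S.card * S.card : ℕ) : ℝ) ≤ ((n ^ 2 * S.card : ℕ) : ℝ) := by
      push_cast at hCS ⊢
      nlinarith [hCS]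
    exact_mod_cast this
  rcases Nat.eq_zero_or_pos S.card with h0 | hpos
  · rw [h0]; positivity
  · exact Nat.le_of_mul_le_mul_right hnat hpos

lemma K3minus_E0 : K3minus.E 0 = {{0,1},{0,2},{1,2}} := rfl
lemma K3minus_E1 : K3minus.E 1 = {{0,1},{0,2}} := rfl

lemma upper_bound {n : ℕ} (hn : 2 ≤ n) (G : ColGraph 2 2 n)
    (hG : ¬ K3minus.IsSubgraph G) :
    G.density ≤ 3/2 + 1/(2*((n:ℝ)-1)) := by
  have hunion : (G.E 0 ∪ G.E 1).card ≤ n.choose 2 := by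
    have hsub : G.E 0 ∪ G.E 1 ⊆ (univ : Finset (Fin n)).powersetCard 2 := by
      intro e he
      rw [Finset.mem_powersetCard]
      rcases Finset.mem_union.mp he with h | h
      exacts [⟨Finset.subset_univ e, G.card_mem 0 e h⟩, ⟨Finset.subset_univ e, G.card_mem 1 e h⟩]
    calc _ ≤ _ := Finset.card_le_card hsub
      _ = n.choose 2 := by rw [Finset.card_powersetCard, Finset.card_univ, Fintype.card_fin]
  -- triangle freeness of the intersection
  have htf : ∀ a b c : Fin n, {a, b} ∈ G.E 0 ∩ G.E 1 → {a, c} ∈ G.E 0 ∩ G.E 1 →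
      {b, c} ∈ G.E 0 ∩ G.E 1 → False := by
    intro a b c hab hac hbc
    have hab0 := (Finset.mem_inter.mp hab).1
    have hab1 := (Finset.mem_inter.mp hab).2
    have hac0 := (Finset.mem_inter.mp hac).1
    have hac1 := (Finset.mem_inter.mp hac).2
    have hbc0 := (Finset.mem_inter.mp hbc).1
    have ne_of_mem : ∀ x y : Fin n, ({x, y} : Finset (Fin n)) ∈ G.E 0 → x ≠ y := by
      intro x y hxy h
      subst h
      have := G.card_mem 0 _ hxy
      simp at this
    have hne_ab : a ≠ b := ne_of_mem a b hab0
    have hne_ac : a ≠ c := ne_of_mem a c hac0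
    have hne_bc : b ≠ c := ne_of_mem b c hbc0
    apply hG
    refine ⟨![a, b, c], ?_, ?_⟩
    · intro i j hij
      fin_cases i <;> fin_cases j <;>
        simp only [Matrix.cons_val_zero, Matrix.cons_val_one, Matrix.head_cons,
          Matrix.cons_val_two, Matrix.tail_cons] at hij <;>
        first
          | rfl
          | exact absurd hij hne_ab
          | exact absurd hij hne_ac
          | exact absurd hij hne_bc
          | exact absurd hij.symm hne_ab
          | exact absurd hij.symm hne_ac
          | exact absurd hij.symm hne_bc
    · intro i e he
      fin_cases i
      · have he' : e ∈ ({{0,1},{0,2},{1,2}} : Finset (Finset (Fin 3))) := he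
        show Finset.image ![a, b, c] e ∈ G.E 0
        simp only [Finset.mem_insert, Finset.mem_singleton] at he'
        rcases he' with rfl | rfl | rfl <;>
          · simp only [Finset.image_insert, Finset.image_singleton]
            simp [hab0, hac0, hbc0]
      · have he' : e ∈ ({{0,1},{0,2}} : Finset (Finset (Fin 3))) := he
        show Finset.image ![a, b, c] e ∈ G.E 1
        simp only [Finset.mem_insert, Finset.mem_singleton] at he'
        rcases he' with rfl | rfl <;>
          · simp only [Finset.image_insert, Finset.image_singleton]
            simp [hab1, hac1]
  have hint : 4 * (G.E 0 ∩ G.E 1).card ≤ n ^ 2 :=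
    mantel _ (fun e he => G.card_mem 0 e (Finset.mem_inter.mp he).1) htf
  have hnat : 4 * ((G.E 0).card + (G.E 1).card) ≤ 4 * n.choose 2 + n ^ 2 := by
    rw [← Finset.card_union_add_card_inter]
    omega
  have hchoose : (n.choose 2 : ℝ) = (n : ℝ) * ((n : ℝ) - 1) / 2 := Nat.cast_choose_two ℝ n
  have hpos : (0 : ℝ) < (n.choose 2 : ℝ) := by
    have : 0 < n.choose 2 := Nat.choose_pos hn
    exact_mod_cast this
  have hn2 : (2 : ℝ) ≤ (n : ℝ) := by exact_mod_cast hn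
  have hy0 : (n : ℝ) - 1 ≠ 0 := by linarith
  have hcnt : ((G.E 0).card : ℝ) + ((G.E 1).card : ℝ) ≤ (3*(n:ℝ)^2 - 2*(n:ℝ))/4 := by
    have h4 : ((4 * ((G.E 0).card + (G.E 1).card) : ℕ) : ℝ) ≤
        ((4 * n.choose 2 + n ^ 2 : ℕ) : ℝ) := by exact_mod_cast hnat
    push_cast at h4
    linarith [h4, hchoose]
  have hdens : G.density = (((G.E 0).card : ℝ) + ((G.E 1).card : ℝ)) / (n.choose 2 : ℝ) := by
    rw [ColGraph.density, Fin.sum_univ_two]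
  rw [hdens, div_le_iff₀ hpos]
  have hident : (3/2 + 1/(2*((n:ℝ)-1))) * ((n.choose 2 : ℝ)) = (3*(n:ℝ)^2 - 2*(n:ℝ))/4 := by
    rw [hchoose]
    field_simp
    ring
  rw [hident]
  exact hcnt

def lowerG (n : ℕ) : ColGraph 2 2 n :=
  mk2
    (((univ : Finset (Fin n)).powersetCard 2).filter
      (fun e => (e.filter (fun v : Fin n => (v : ℕ) < n / 2)).card = 1))
    ((univ : Finset (Fin n)).powersetCard 2)
    (fun e he => (Finset.mem_powersetCard.mp (Finset.mem_filter.mp he).1).2)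
    (fun e he => (Finset.mem_powersetCard.mp he).2)

lemma pair_filter_card {n : ℕ} (P : Fin n → Prop) [DecidablePred P] {x y : Fin n}
    (hxy : x ≠ y) (h : (({x, y} : Finset (Fin n)).filter P).card = 1) : (P x ↔ ¬ P y) := by
  by_cases hx : P x <;> by_cases hy : P y <;>
    simp_all [Finset.filter_insert, Finset.filter_singleton, hxy,
      Finset.card_insert_of_notMem, Finset.mem_singleton]

lemma lowerG_free (n : ℕ) : ¬ K3minus.IsSubgraph (lowerG n) := by
  rintro ⟨f, hinj, hf⟩
  have h0 := hf 0
  have key : ∀ x y : Fin 3, x ≠ y → ({x, y} : Finset (Fin 3)) ∈ K3minus.E 0 →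
      (((f x : ℕ) < n / 2) ↔ ¬ ((f y : ℕ) < n / 2)) := by
    intro x y hxy hmem
    have := h0 _ hmem
    have himg : ({x, y} : Finset (Fin 3)).image f = {f x, f y} := by
      simp [Finset.image_insert, Finset.image_singleton]
    rw [himg] at this
    have hmemf := (Finset.mem_filter.mp this).2
    exact pair_filter_card _ (fun h => hxy (hinj h)) hmemf
  have h01 : ({0, 1} : Finset (Fin 3)) ∈ K3minus.E 0 := by decide
  have h02 : ({0, 2} : Finset (Fin 3)) ∈ K3minus.E 0 := by decide
  have h12 : ({1, 2} : Finset (Fin 3)) ∈ K3minus.E 0 := by decide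
  have k01 := key 0 1 (by decide) h01
  have k02 := key 0 2 (by decide) h02
  have k12 := key 1 2 (by decide) h12
  tauto

lemma lowerG_density {n : ℕ} (hn : 2 ≤ n) : 3/2 ≤ (lowerG n).density := by
  set L := (univ : Finset (Fin n)).filter (fun v : Fin n => (v : ℕ) < n / 2) with hL
  set Lc := (univ : Finset (Fin n)).filter (fun v : Fin n => ¬ (v : ℕ) < n / 2) with hLc
  have hLcard : L.card = n / 2 := by
    have himg : L.image Fin.val = Finset.range (n / 2) := by
      ext m
      simp only [hL, Finset.mem_image, Finset.mem_filter, Finset.mem_univ, true_and,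
        Finset.mem_range]
      constructor
      · rintro ⟨v, hv, rfl⟩; exact hv
      · intro hm
        exact ⟨⟨m, lt_of_lt_of_le hm (Nat.div_le_self n 2)⟩, hm, rfl⟩
    have := Finset.card_image_of_injective L (Fin.val_injective)
    rw [himg, Finset.card_range] at this
    omega
  have hLccard : Lc.card = n - n / 2 := by
    rw [hLc, Finset.filter_not, Finset.card_sdiff_of_subset (Finset.filter_subset _ _),
      Finset.card_univ, Fintype.card_fin, ← hL, hLcard]
  -- injection from L ×ˢ Lc into the red edge set
  have hinj : ((L ×ˢ Lc).card : ℕ) ≤ ((lowerG n).E 0).card := by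
    apply Finset.card_le_card_of_injOn (fun p => ({p.1, p.2} : Finset (Fin n)))
    · rintro ⟨a, b⟩ hp
      have hp : (a, b) ∈ L ×ˢ Lc := hp
      simp only [Finset.mem_product, hL, hLc, Finset.mem_filter, Finset.mem_univ,
        true_and] at hp
      have hab : a ≠ b := fun h => hp.2 (h ▸ hp.1)
      show _ ∈ (lowerG n).E 0
      have : (lowerG n).E 0 = ((univ : Finset (Fin n)).powersetCard 2).filter
          (fun e => (e.filter (fun v : Fin n => (v : ℕ) < n / 2)).card = 1) := rfl
      rw [this, Finset.mem_filter, Finset.mem_powersetCard]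
      refine ⟨⟨Finset.subset_univ _, ?_⟩, ?_⟩
      · rw [Finset.card_insert_of_notMem (by simp [hab]), Finset.card_singleton]
      · rw [Finset.filter_insert, if_pos hp.1, Finset.filter_singleton, if_neg hp.2]
        simp
    · rintro ⟨a, b⟩ hp ⟨c, d⟩ hq heq
      simp only [Finset.coe_product, Set.mem_prod, Finset.mem_coe, hL, hLc,
        Finset.mem_filter, Finset.mem_univ, true_and] at hp hq
      simp only at heq
      have hac : a = c := by
        have : a ∈ ({c, d} : Finset (Fin n)) := heq ▸ Finset.mem_insert_self a {b}
        rcases Finset.mem_insert.mp this with h | h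
        · exact h
        · rw [Finset.mem_singleton] at h
          exact absurd (h ▸ hp.1) hq.2
      have hbd : b = d := by
        have : b ∈ ({c, d} : Finset (Fin n)) :=
          heq ▸ Finset.mem_insert_of_mem (Finset.mem_singleton_self b)
        rcases Finset.mem_insert.mp this with h | h
        · exact absurd (h ▸ hq.1) hp.2
        · exact Finset.mem_singleton.mp h
      simp [hac, hbd]
  rw [Finset.card_product, hLcard, hLccard] at hinj
  -- density computation
  have hE1 : ((lowerG n).E 1).card = n.choose 2 := by
    have : (lowerG n).E 1 = (univ : Finset (Fin n)).powersetCard 2 := rfl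
    rw [this, Finset.card_powersetCard, Finset.card_univ, Fintype.card_fin]
  have hpos : (0 : ℝ) < (n.choose 2 : ℝ) := by
    have : 0 < n.choose 2 := Nat.choose_pos hn
    exact_mod_cast this
  have hchoose : (n.choose 2 : ℝ) = (n : ℝ) * ((n : ℝ) - 1) / 2 := Nat.cast_choose_two ℝ n
  have hdens : (lowerG n).density =
      ((((lowerG n).E 0).card : ℝ) + (((lowerG n).E 1).card : ℝ)) / (n.choose 2 : ℝ) := by
    rw [ColGraph.density, Fin.sum_univ_two]
  -- real lower bound on red count: (n/2)*(n - n/2) ≥ n(n-1)/4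
  have hred : ((n : ℝ) * ((n : ℝ) - 1)) / 4 ≤ (((lowerG n).E 0).card : ℝ) := by
    have hc : (((n / 2) * (n - n / 2) : ℕ) : ℝ) ≤ (((lowerG n).E 0).card : ℝ) := by
      exact_mod_cast hinj
    refine le_trans ?_ hc
    rcases Nat.even_or_odd n with ⟨k, hk⟩ | ⟨k, hk⟩
    · have h2 : n / 2 = k := by omega
      have h3 : n - n / 2 = k := by omega
      rw [h3, h2, hk]
      push_cast
      nlinarith [sq_nonneg ((k : ℝ))]
    · have h2 : n / 2 = k := by omega
      have h3 : n - n / 2 = k + 1 := by omega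
      rw [h3, h2, hk]
      push_cast
      nlinarith [sq_nonneg ((k : ℝ))]
  rw [hdens, le_div_iff₀ hpos, hE1]
  rw [hchoose]
  linarith

lemma turan_ge {n : ℕ} (hn : 2 ≤ n) : 3/2 ≤ K3minus.turanDensityN n := by
  rw [ColGraph.turanDensityN]
  have hmem : (lowerG n).density ∈
      {x : ℝ | ∃ G : ColGraph 2 2 n, ¬ K3minus.IsSubgraph G ∧ G.density = x} :=
    ⟨lowerG n, lowerG_free n, rfl⟩
  have hbdd : BddAbove {x : ℝ | ∃ G : ColGraph 2 2 n, ¬ K3minus.IsSubgraph G ∧ G.density = x} := by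
    refine ⟨3/2 + 1/(2*((n:ℝ)-1)), ?_⟩
    rintro x ⟨G, hG, rfl⟩
    exact upper_bound hn G hG
  exact le_trans (lowerG_density hn) (le_csSup hbdd hmem)

lemma turan_le {n : ℕ} (hn : 2 ≤ n) :
    K3minus.turanDensityN n ≤ 3/2 + 1/(2*((n:ℝ)-1)) := by
  rw [ColGraph.turanDensityN]
  apply Real.sSup_le
  · rintro x ⟨G, hG, rfl⟩
    exact upper_bound hn G hG
  · have hn2 : (2:ℝ) ≤ (n:ℝ) := by exact_mod_cast hn
    have : (0:ℝ) ≤ 1/(2*((n:ℝ)-1)) := by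
      apply div_nonneg (by norm_num)
      linarith
    linarith

theorem K3minus_turan_density :
    Filter.Tendsto K3minus.turanDensityN Filter.atTop (nhds (3 / 2)) := by
  have hupper : Filter.Tendsto (fun n : ℕ => 3/2 + 1/(2*((n:ℝ)-1)))
      Filter.atTop (nhds (3/2)) := by
    have h1 : Filter.Tendsto (fun n : ℕ => 2*((n:ℝ)-1)) Filter.atTop Filter.atTop := by
      apply Filter.Tendsto.const_mul_atTop (by norm_num : (0:ℝ) < 2)
      apply Filter.tendsto_atTop_add_const_right
      exact tendsto_natCast_atTop_atTop
    have h3 : Filter.Tendsto (fun n : ℕ => 1/(2*((n:ℝ)-1))) Filter.atTop (nhds 0) := by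
      have := h1.inv_tendsto_atTop
      simp only [Pi.inv_def] at this
      simpa [one_div] using this
    simpa using tendsto_const_nhds.add h3
  refine tendsto_of_tendsto_of_tendsto_of_le_of_le' tendsto_const_nhds hupper ?_ ?_
  · filter_upwards [Filter.eventually_ge_atTop 2] with n hn
    exact turan_ge hn
  · filter_upwards [Filter.eventually_ge_atTop 2] with n hn
    exact turan_le hn
end

section
/- Let T_1 be the 2-colored graph with vertex set {1,2,3,4}, red edges {12, 34, 13, 24} and blue edges {12, 34, 14, 23}. For every n ≥ 1 with n ≠ 3, the maximum of |E_r(G)| + |E_b(G)| over all T_1-free 2-colored graphs G on n vertices equals C(n,2) + ⌊n²/4⌋, and for n = 3 this maximum equals 6. In particular, π_n(T_1) → 3/2 as n → ∞. -/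
open Finset Filter

section Upper

variable {n : ℕ} (G : ColGraph 2 2 n)

def dblE (e : Finset (Fin n)) : Prop := e ∈ G.E 0 ∧ e ∈ G.E 1

def misE (e : Finset (Fin n)) : Prop := e ∉ G.E 0 ∧ e ∉ G.E 1

instance (e : Finset (Fin n)) : Decidable (dblE G e) := by unfold dblE; infer_instance
instance (e : Finset (Fin n)) : Decidable (misE G e) := by unfold misE; infer_instance

def DD (S : Finset (Fin n)) : Finset (Finset (Fin n)) :=
  (Finset.powersetCard 2 S).filter (fun e => dblE G e)

def MM (S : Finset (Fin n)) : Finset (Finset (Fin n)) :=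
  (Finset.powersetCard 2 S).filter (fun e => misE G e)

lemma T1E0 : T1.E 0 = {{0,1},{2,3},{0,2},{1,3}} := rfl
lemma T1E1 : T1.E 1 = {{0,1},{2,3},{0,3},{1,2}} := rfl

lemma key_lemma (hfree : ¬ T1.IsSubgraph G) {a b c d : Fin n}
    (hab : a ≠ b) (hac : a ≠ c) (had : a ≠ d) (hbc : b ≠ c) (hbd : b ≠ d) (hcd : c ≠ d)
    (h1 : dblE G {a,b}) (h2 : dblE G {a,c}) (h3 : dblE G {b,c})
    (h4 : dblE G {a,d}) (h5 : dblE G {b,d}) : misE G {c,d} := by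
  constructor
  · intro hred
    apply hfree
    refine ⟨![a,d,b,c], ?_, ?_⟩
    · intro x y hxy
      fin_cases x <;> fin_cases y <;> simp_all
    · intro i e he
      fin_cases i
      · replace he : e ∈ ({{0,1},{2,3},{0,2},{1,3}} : Finset (Finset (Fin 4))) := he
        show Finset.image _ e ∈ G.E 0
        fin_cases he <;>
          simp only [Finset.image_insert, Finset.image_singleton] <;>
          simp only [Matrix.cons_val_zero, Matrix.cons_val_one, Matrix.head_cons,
            Matrix.cons_val_two, Matrix.tail_cons, Matrix.cons_val_three]
        · exact h4.1
        · exact h3.1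
        · exact h1.1
        · rw [Finset.pair_comm]; exact hred
      · replace he : e ∈ ({{0,1},{2,3},{0,3},{1,2}} : Finset (Finset (Fin 4))) := he
        show Finset.image _ e ∈ G.E 1
        fin_cases he <;>
          simp only [Finset.image_insert, Finset.image_singleton] <;>
          simp only [Matrix.cons_val_zero, Matrix.cons_val_one, Matrix.head_cons,
            Matrix.cons_val_two, Matrix.tail_cons, Matrix.cons_val_three]
        · exact h4.2
        · exact h3.2
        · exact h2.2
        · rw [Finset.pair_comm]; exact h5.2
  · intro hblue
    apply hfree
    refine ⟨![d,a,b,c], ?_, ?_⟩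
    · intro x y hxy
      fin_cases x <;> fin_cases y <;> simp_all
    · intro i e he
      fin_cases i
      · replace he : e ∈ ({{0,1},{2,3},{0,2},{1,3}} : Finset (Finset (Fin 4))) := he
        show Finset.image _ e ∈ G.E 0
        fin_cases he <;>
          simp only [Finset.image_insert, Finset.image_singleton] <;>
          simp only [Matrix.cons_val_zero, Matrix.cons_val_one, Matrix.head_cons,
            Matrix.cons_val_two, Matrix.tail_cons, Matrix.cons_val_three]
        · rw [Finset.pair_comm]; exact h4.1
        · exact h3.1
        · rw [Finset.pair_comm]; exact h5.1
        · exact h2.1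
      · replace he : e ∈ ({{0,1},{2,3},{0,3},{1,2}} : Finset (Finset (Fin 4))) := he
        show Finset.image _ e ∈ G.E 1
        fin_cases he <;>
          simp only [Finset.image_insert, Finset.image_singleton] <;>
          simp only [Matrix.cons_val_zero, Matrix.cons_val_one, Matrix.head_cons,
            Matrix.cons_val_two, Matrix.tail_cons, Matrix.cons_val_three]
        · rw [Finset.pair_comm]; exact h4.2
        · exact h3.2
        · rw [Finset.pair_comm]; exact hblue
        · exact h1.2
  
end Upper
section Counting

variable {n : ℕ} (G : ColGraph 2 2 n)

lemma perD_lemma (hfree : ¬ T1.IsSubgraph G) {a b c d : Fin n}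
    (hab : a ≠ b) (hac : a ≠ c) (had : a ≠ d) (hbc : b ≠ c) (hbd : b ≠ d) (hcd : c ≠ d)
    (h1 : dblE G {a,b}) (h2 : dblE G {a,c}) (h3 : dblE G {b,c}) :
    (if dblE G {a,d} then 1 else 0) + (if dblE G {b,d} then 1 else 0)
      + (if dblE G {c,d} then 1 else 0)
    ≤ (if misE G {a,d} then 1 else 0) + (if misE G {b,d} then 1 else 0)
      + (if misE G {c,d} then 1 else 0) + 1 := by
  have k1 : dblE G {a,d} → dblE G {b,d} → misE G {c,d} :=
    fun x y => key_lemma G hfree hab hac had hbc hbd hcd h1 h2 h3 x y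
  have k2 : dblE G {a,d} → dblE G {c,d} → misE G {b,d} := by
    intro x y
    exact key_lemma G hfree hac hab had hbc.symm hcd hbd h2 h1
      (by rwa [Finset.pair_comm]) x y
  have k3 : dblE G {b,d} → dblE G {c,d} → misE G {a,d} := by
    intro x y
    exact key_lemma G hfree hbc hab.symm hbd hac.symm hcd had
      h3 (by rwa [Finset.pair_comm]) (by rwa [Finset.pair_comm]) x y
  have e1 : ∀ e, ¬ (dblE G e ∧ misE G e) := by
    rintro e ⟨⟨u, -⟩, ⟨v, -⟩⟩; exact v u
  set m1 := (if misE G {a,d} then (1:ℕ) else 0) with hm1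
  set m2 := (if misE G {b,d} then (1:ℕ) else 0) with hm2
  set m3 := (if misE G {c,d} then (1:ℕ) else 0) with hm3
  have hm1' : misE G {a,d} → m1 = 1 := fun h => by rw [hm1, if_pos h]
  have hm2' : misE G {b,d} → m2 = 1 := fun h => by rw [hm2, if_pos h]
  have hm3' : misE G {c,d} → m3 = 1 := fun h => by rw [hm3, if_pos h]
  by_cases ha : dblE G {a,d} <;> by_cases hb : dblE G {b,d} <;> by_cases hc : dblE G {c,d}
  · exact absurd ⟨hc, k1 ha hb⟩ (e1 _)
  · rw [if_pos ha, if_pos hb, if_neg hc]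
    have := hm3' (k1 ha hb); omega
  · rw [if_pos ha, if_neg hb, if_pos hc]
    have := hm2' (k2 ha hc); omega
  · rw [if_pos ha, if_neg hb, if_neg hc]; omega
  · rw [if_neg ha, if_pos hb, if_pos hc]
    have := hm1' (k3 hb hc); omega
  · rw [if_neg ha, if_pos hb, if_neg hc]; omega
  · rw [if_neg ha, if_neg hb, if_pos hc]; omega
  · rw [if_neg ha, if_neg hb, if_neg hc]; omega

lemma pair_eq_of_card_two {e : Finset (Fin n)} (hcard : e.card = 2) {r d : Fin n}
    (hr : r ∈ e) (hd : d ∈ e) (hrd : r ≠ d) : e = {r, d} := by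
  obtain ⟨x, y, hxy, rfl⟩ := Finset.card_eq_two.mp hcard
  simp only [Finset.mem_insert, Finset.mem_singleton] at hr hd
  rcases hr with rfl | rfl <;> rcases hd with rfl | rfl <;> first
    | exact absurd rfl hrd
    | rfl
    | exact Finset.pair_comm _ _

lemma DD_split (S R : Finset (Fin n)) :
    (DD G S).card ≤ (DD G (S \ R)).card + (Finset.powersetCard 2 R).card
      + ∑ d ∈ S \ R, ∑ r ∈ R, (if dblE G {r,d} then 1 else 0) := by
  classical
  set cross := ((R ×ˢ (S \ R)).filter (fun p => dblE G {p.1, p.2})).image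
    (fun p => ({p.1, p.2} : Finset (Fin n))) with hcross
  have hsub : DD G S ⊆ DD G (S \ R) ∪ (Finset.powersetCard 2 R ∪ cross) := by
    intro e he
    rw [DD, Finset.mem_filter, Finset.mem_powersetCard] at he
    obtain ⟨⟨heS, hcard⟩, hdbl⟩ := he
    rw [Finset.mem_union, Finset.mem_union]
    by_cases hR : e ⊆ R
    · exact Or.inr (Or.inl (Finset.mem_powersetCard.mpr ⟨hR, hcard⟩))
    by_cases hD : ∀ x ∈ e, x ∉ R
    · refine Or.inl ?_
      rw [DD, Finset.mem_filter, Finset.mem_powersetCard]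
      exact ⟨⟨fun x hx => Finset.mem_sdiff.mpr ⟨heS hx, hD x hx⟩, hcard⟩, hdbl⟩
    · rw [Finset.not_subset] at hR
      push_neg at hD
      obtain ⟨d, hde, hdR⟩ := hR
      obtain ⟨r, hre, hrR⟩ := hD
      have hrd : r ≠ d := fun h => hdR (h ▸ hrR)
      have he2 : e = {r, d} := pair_eq_of_card_two hcard hre hde hrd
      refine Or.inr (Or.inr ?_)
      rw [hcross, Finset.mem_image]
      exact ⟨(r, d), Finset.mem_filter.mpr ⟨Finset.mem_product.mpr
        ⟨hrR, Finset.mem_sdiff.mpr ⟨heS hde, hdR⟩⟩, he2 ▸ hdbl⟩, he2.symm⟩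
  calc (DD G S).card ≤ (DD G (S \ R) ∪ (Finset.powersetCard 2 R ∪ cross)).card :=
        Finset.card_le_card hsub
    _ ≤ (DD G (S \ R)).card + (Finset.powersetCard 2 R ∪ cross).card :=
        Finset.card_union_le _ _
    _ ≤ (DD G (S \ R)).card + ((Finset.powersetCard 2 R).card + cross.card) := by
        have := Finset.card_union_le (Finset.powersetCard 2 R) cross
        omega
    _ ≤ _ := by
        have h1 : cross.card ≤ ((R ×ˢ (S \ R)).filter (fun p => dblE G {p.1, p.2})).card :=
          Finset.card_image_le
        have h2 : ((R ×ˢ (S \ R)).filter (fun p => dblE G {p.1, p.2})).card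
            = ∑ d ∈ S \ R, ∑ r ∈ R, (if dblE G {r,d} then 1 else 0) := by
          rw [Finset.card_filter, Finset.sum_product]
          exact Finset.sum_comm
        omega

lemma MM_split (S R : Finset (Fin n)) (hRS : R ⊆ S) :
    (MM G (S \ R)).card + ∑ d ∈ S \ R, ∑ r ∈ R, (if misE G {r,d} then 1 else 0)
      ≤ (MM G S).card := by
  classical
  set crossM := ((R ×ˢ (S \ R)).filter (fun p => misE G {p.1, p.2})).image
    (fun p => ({p.1, p.2} : Finset (Fin n))) with hcrossM
  have hinj : Set.InjOn (fun p : Fin n × Fin n => ({p.1, p.2} : Finset (Fin n)))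
      ((R ×ˢ (S \ R)).filter (fun p => misE G {p.1, p.2})) := by
    rintro ⟨r1, d1⟩ hp1 ⟨r2, d2⟩ hp2 h
    simp only [Finset.coe_filter, Set.mem_setOf_eq, Finset.mem_product,
      Finset.mem_sdiff] at hp1 hp2
    obtain ⟨⟨hr1R, hd1S, hd1R⟩, -⟩ := hp1
    obtain ⟨⟨hr2R, hd2S, hd2R⟩, -⟩ := hp2
    simp only at h
    have hr2 : r2 ∈ ({r1, d1} : Finset (Fin n)) := by rw [h]; simp
    have hd2 : d2 ∈ ({r1, d1} : Finset (Fin n)) := by rw [h]; simp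
    simp only [Finset.mem_insert, Finset.mem_singleton] at hr2 hd2
    have hr : r2 = r1 := by
      rcases hr2 with h' | h'
      · exact h'
      · exact absurd (h' ▸ hr2R) hd1R
    have hd : d2 = d1 := by
      rcases hd2 with h' | h'
      · exact absurd (h' ▸ hr1R : r1 ∈ R) (h' ▸ hd2R : r1 ∉ R)
      · exact h'
    simp [hr, hd]
  have hcard : crossM.card = ∑ d ∈ S \ R, ∑ r ∈ R, (if misE G {r,d} then 1 else 0) := by
    rw [hcrossM, Finset.card_image_of_injOn hinj, Finset.card_filter, Finset.sum_product]
    exact Finset.sum_comm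
  have hdisj : Disjoint (MM G (S \ R)) crossM := by
    rw [Finset.disjoint_left]
    intro e he hec
    rw [MM, Finset.mem_filter, Finset.mem_powersetCard] at he
    rw [hcrossM, Finset.mem_image] at hec
    obtain ⟨⟨r, d⟩, hp, he2⟩ := hec
    simp only [Finset.mem_filter, Finset.mem_product, Finset.mem_sdiff] at hp
    obtain ⟨⟨hrR, hdS, hdR⟩, -⟩ := hp
    have : r ∈ e := by rw [← he2]; simp
    exact (Finset.mem_sdiff.mp (he.1.1 this)).2 hrR
  have hsub : MM G (S \ R) ∪ crossM ⊆ MM G S := by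
    intro e he
    rw [Finset.mem_union] at he
    rcases he with he | he
    · rw [MM, Finset.mem_filter, Finset.mem_powersetCard] at he ⊢
      exact ⟨⟨he.1.1.trans (Finset.sdiff_subset), he.1.2⟩, he.2⟩
    · rw [hcrossM, Finset.mem_image] at he
      obtain ⟨⟨r, d⟩, hp, he2⟩ := he
      simp only [Finset.mem_filter, Finset.mem_product, Finset.mem_sdiff] at hp
      obtain ⟨⟨hrR, hdS, hdR⟩, hmis⟩ := hp
      rw [MM, Finset.mem_filter, Finset.mem_powersetCard, ← he2]
      refine ⟨⟨?_, ?_⟩, hmis⟩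
      · intro x hx
        simp only [Finset.mem_insert, Finset.mem_singleton] at hx
        rcases hx with rfl | rfl
        · exact hRS hrR
        · exact hdS
      · rw [Finset.card_insert_of_notMem, Finset.card_singleton]
        simp only [Finset.mem_singleton]
        intro h
        exact hdR (h ▸ hrR)
  calc (MM G (S \ R)).card + ∑ d ∈ S \ R, ∑ r ∈ R, (if misE G {r,d} then 1 else 0)
      = (MM G (S \ R) ∪ crossM).card := by
        rw [Finset.card_union_of_disjoint hdisj, hcard]
    _ ≤ (MM G S).card := Finset.card_le_card hsub

end Counting
section MainBound

variable {n : ℕ} (G : ColGraph 2 2 n)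

lemma sq_mod_four (t : ℕ) : t^2 % 4 = 0 ∨ t^2 % 4 = 1 := by
  rw [Nat.pow_mod]
  have : t % 4 = 0 ∨ t % 4 = 1 ∨ t % 4 = 2 ∨ t % 4 = 3 := by omega
  rcases this with h|h|h|h <;> rw [h] <;> simp

lemma sq_mod_two (t : ℕ) : t^2 % 2 = t % 2 := by
  rw [Nat.pow_mod]
  have : t % 2 = 0 ∨ t % 2 = 1 := by omega
  rcases this with h|h <;> rw [h] <;> simp

lemma mantel_arith (t : ℕ) : t^2/4 + (t + 1) ≤ (t+2)^2/4 := by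
  have h1 : (t+2)^2 = t^2 + 4*t + 4 := by ring
  have h2 := sq_mod_four t
  omega

lemma main_arith (t : ℕ) (ht : 1 ≤ t) :
    t^2/4 + (if t = 3 then 1 else 0) + 3 + t ≤ (t+3)^2/4 := by
  have h1 : (t+3)^2 = t^2 + 6*t + 9 := by ring
  have h2 := sq_mod_four t
  have h3 := sq_mod_two t
  by_cases h : t = 3
  · subst h; norm_num
  · rw [if_neg h]; omega

def HasDblTri (S : Finset (Fin n)) : Prop :=
  ∃ a ∈ S, ∃ b ∈ S, ∃ c ∈ S, a ≠ b ∧ a ≠ c ∧ b ≠ c ∧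
    dblE G {a,b} ∧ dblE G {a,c} ∧ dblE G {b,c}

lemma mantel_lemma : ∀ S : Finset (Fin n), ¬ HasDblTri G S → (DD G S).card ≤ S.card^2/4 := by
  intro S
  induction S using Finset.strongInduction with
  | _ S ih =>
    intro htf
    rcases (DD G S).eq_empty_or_nonempty with hD | ⟨e, he⟩
    · simp [hD]
    · have heS := (Finset.mem_powersetCard.mp (Finset.mem_filter.mp he).1)
      have hdbl : dblE G e := (Finset.mem_filter.mp he).2
      obtain ⟨a, b, hab, rfl⟩ := Finset.card_eq_two.mp heS.2
      have haS : a ∈ S := heS.1 (by simp)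
      have hbS : b ∈ S := heS.1 (by simp)
      have hRS : ({a,b} : Finset (Fin n)) ⊆ S := by
        intro x hx
        simp only [Finset.mem_insert, Finset.mem_singleton] at hx
        rcases hx with rfl | rfl <;> assumption
      have hcR : ({a,b} : Finset (Fin n)).card = 2 := by
        rw [Finset.card_insert_of_notMem (by simp [hab]), Finset.card_singleton]
      have hsd : (S \ {a,b}).card = S.card - 2 := by rw [Finset.card_sdiff_of_subset hRS, hcR]
      have hS2 : 2 ≤ S.card := hcR ▸ Finset.card_le_card hRS
      obtain ⟨t, ht⟩ : ∃ t, S.card = t + 2 := ⟨S.card - 2, by omega⟩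
      have hsplit := DD_split G S {a,b}
      have hP2 : (Finset.powersetCard 2 ({a,b} : Finset (Fin n))).card = 1 := by
        rw [Finset.card_powersetCard, hcR]
        rfl
      have hsum : ∑ d ∈ S \ {a,b}, ∑ r ∈ ({a,b} : Finset (Fin n)),
          (if dblE G {r,d} then 1 else 0) ≤ ∑ _d ∈ S \ {a,b}, 1 := by
        refine Finset.sum_le_sum ?_
        intro d hd
        have hd' := Finset.mem_sdiff.mp hd
        have hda : d ≠ a := fun h => hd'.2 (by simp [h])
        have hdb : d ≠ b := fun h => hd'.2 (by simp [h])
        rw [Finset.sum_insert (by simp [hab]), Finset.sum_singleton]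
        by_cases h1 : dblE G {a,d} <;> by_cases h2 : dblE G {b,d}
        · exact absurd ⟨a, haS, b, hbS, d, hd'.1, hab, hda.symm.symm.symm,
            (by exact fun h => hdb h.symm : b ≠ d), hdbl, h1, h2⟩ htf
        · rw [if_pos h1, if_neg h2]
        · rw [if_neg h1, if_pos h2]
        · rw [if_neg h1, if_neg h2]; omega
      rw [Finset.sum_const, smul_eq_mul, mul_one, hsd, ht] at hsum
      have hssub : S \ {a,b} ⊂ S :=
        Finset.sdiff_ssubset hRS (by simp)
      have hIH := ih _ hssub (fun hcon => by
        obtain ⟨x, hx, y, hy, z, hz, hrest⟩ := hcon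
        exact htf ⟨x, Finset.sdiff_subset hx, y, Finset.sdiff_subset hy, z,
          Finset.sdiff_subset hz, hrest⟩)
      rw [hsd, ht] at hIH
      have harith := mantel_arith t
      have hexp : (t+2)^2 = t^2 + 4*t + 4 := by ring
      rw [ht]
      simp only [Nat.add_sub_cancel] at hIH hsum
      omega

lemma main_bound (hfree : ¬ T1.IsSubgraph G) : ∀ S : Finset (Fin n),
    (DD G S).card ≤ (MM G S).card + S.card^2/4 + (if S.card = 3 then 1 else 0) := by
  intro S
  induction S using Finset.strongInduction with
  | _ S ih =>
    by_cases htri : HasDblTri G S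
    case neg =>
      have h := mantel_lemma G S htri
      omega
    case pos =>
      obtain ⟨a, haS, b, hbS, c, hcS, hab, hac, hbc, h1, h2, h3⟩ := htri
      have hRS : ({a,b,c} : Finset (Fin n)) ⊆ S := by
        intro x hx
        simp only [Finset.mem_insert, Finset.mem_singleton] at hx
        rcases hx with rfl | rfl | rfl <;> assumption
      have hcR : ({a,b,c} : Finset (Fin n)).card = 3 := by
        rw [Finset.card_insert_of_notMem (by simp [hab, hac]),
          Finset.card_insert_of_notMem (by simp [hbc]), Finset.card_singleton]
      have hS3 : 3 ≤ S.card := hcR ▸ Finset.card_le_card hRS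
      by_cases hcard : S.card = 3
      · have hDD : (DD G S).card ≤ 3 := by
          calc (DD G S).card ≤ (Finset.powersetCard 2 S).card := Finset.card_filter_le _ _
            _ = 3 := by rw [Finset.card_powersetCard, hcard]; rfl
        rw [hcard]
        norm_num
        omega
      · have hS4 : 4 ≤ S.card := by omega
        have hsd : (S \ {a,b,c}).card = S.card - 3 := by rw [Finset.card_sdiff_of_subset hRS, hcR]
        obtain ⟨t, ht⟩ : ∃ t, S.card = t + 3 := ⟨S.card - 3, by omega⟩
        have ht1 : 1 ≤ t := by omega
        have hsplit := DD_split G S {a,b,c}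
        have hP2 : (Finset.powersetCard 2 ({a,b,c} : Finset (Fin n))).card = 3 := by
          rw [Finset.card_powersetCard, hcR]
          rfl
        have hsum : ∑ d ∈ S \ {a,b,c}, ∑ r ∈ ({a,b,c} : Finset (Fin n)),
            (if dblE G {r,d} then 1 else 0)
            ≤ ∑ d ∈ S \ {a,b,c}, ((∑ r ∈ ({a,b,c} : Finset (Fin n)),
              (if misE G {r,d} then 1 else 0)) + 1) := by
          refine Finset.sum_le_sum ?_
          intro d hd
          have hd' := Finset.mem_sdiff.mp hd
          have hda : a ≠ d := fun h => hd'.2 (by simp [h])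
          have hdb : b ≠ d := fun h => hd'.2 (by simp [h])
          have hdc : c ≠ d := fun h => hd'.2 (by simp [h])
          rw [Finset.sum_insert (by simp [hab, hac]), Finset.sum_insert (by simp [hbc]),
            Finset.sum_singleton, Finset.sum_insert (by simp [hab, hac]),
            Finset.sum_insert (by simp [hbc]), Finset.sum_singleton]
          have := perD_lemma G hfree hab hac hda hbc hdb hdc h1 h2 h3
          omega
        rw [Finset.sum_add_distrib, Finset.sum_const, smul_eq_mul, mul_one, hsd, ht] at hsum
        have hmm := MM_split G S {a,b,c} hRS
        have hssub : S \ {a,b,c} ⊂ S := Finset.sdiff_ssubset hRS (by simp)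
        have hIH := ih _ hssub
        rw [hsd, ht] at hIH
        have harith := main_arith t ht1
        have hexp : (t+3)^2 = t^2 + 6*t + 9 := by ring
        rw [ht]
        simp only [Nat.add_sub_cancel] at hIH hsum
        have hne : ¬ (t + 3 = 3) := by omega
        rw [if_neg hne]
        omega

end MainBound
section Assembly

lemma card_sum_eq {n : ℕ} (G : ColGraph 2 2 n) :
    (G.E 0).card + (G.E 1).card + (MM G Finset.univ).card
      = n.choose 2 + (DD G Finset.univ).card := by
  classical
  have hsub0 : G.E 0 ⊆ Finset.powersetCard 2 Finset.univ := fun e he =>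
    Finset.mem_powersetCard.mpr ⟨Finset.subset_univ _, G.card_mem 0 e he⟩
  have hsub1 : G.E 1 ⊆ Finset.powersetCard 2 Finset.univ := fun e he =>
    Finset.mem_powersetCard.mpr ⟨Finset.subset_univ _, G.card_mem 1 e he⟩
  have hD : DD G Finset.univ = G.E 0 ∩ G.E 1 := by
    ext e
    rw [DD, Finset.mem_filter]
    simp only [DD, dblE, Finset.mem_filter, Finset.mem_powersetCard, Finset.mem_inter]
    exact ⟨fun h => h.2, fun h => ⟨⟨Finset.subset_univ _, G.card_mem 0 e h.1⟩, h⟩⟩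
  have hM : MM G Finset.univ = Finset.powersetCard 2 Finset.univ \ (G.E 0 ∪ G.E 1) := by
    ext e
    rw [MM, Finset.mem_filter]
    simp only [MM, misE, Finset.mem_filter, Finset.mem_sdiff, Finset.mem_union]
    tauto
  have hP : (Finset.powersetCard 2 (Finset.univ : Finset (Fin n))).card = n.choose 2 := by
    rw [Finset.card_powersetCard, Finset.card_univ, Fintype.card_fin]
  have hunion : G.E 0 ∪ G.E 1 ⊆ Finset.powersetCard 2 Finset.univ :=
    Finset.union_subset hsub0 hsub1
  have h2 := Finset.card_sdiff_add_card_eq_card hunion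
  have h3 := Finset.card_union_add_card_inter (G.E 0) (G.E 1)
  rw [hD, hM]
  omega

lemma upper_bound_s7 {n : ℕ} (G : ColGraph 2 2 n) (hfree : ¬ T1.IsSubgraph G) (hn3 : n ≠ 3) :
    (G.E 0).card + (G.E 1).card ≤ n.choose 2 + n^2/4 := by
  have h := main_bound G hfree Finset.univ
  rw [Finset.card_univ, Fintype.card_fin, if_neg hn3] at h
  have h2 := card_sum_eq G
  omega

def consR (n : ℕ) : Finset (Finset (Fin n)) :=
  (Finset.powersetCard 2 Finset.univ).filter
    (fun e => ¬ e ⊆ Finset.univ.filter (fun v : Fin n => ¬ ((v:ℕ) < n/2)))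

def consB (n : ℕ) : Finset (Finset (Fin n)) :=
  (Finset.powersetCard 2 Finset.univ).filter
    (fun e => ¬ e ⊆ Finset.univ.filter (fun v : Fin n => (v:ℕ) < n/2))

def consG (n : ℕ) : ColGraph 2 2 n :=
  mk2 (consR n) (consB n)
    (fun e he => (Finset.mem_powersetCard.mp (Finset.mem_filter.mp he).1).2)
    (fun e he => (Finset.mem_powersetCard.mp (Finset.mem_filter.mp he).1).2)

lemma consG_E0 (n : ℕ) : (consG n).E 0 = consR n := rfl
lemma consG_E1 (n : ℕ) : (consG n).E 1 = consB n := rfl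

lemma consG_free (n : ℕ) : ¬ T1.IsSubgraph (consG n) := by
  rintro ⟨f, hinj, hE⟩
  have himg : ∀ (i j : Fin 4), (({i, j} : Finset (Fin 4)).image f) = {f i, f j} := by
    intro i j; rw [Finset.image_insert, Finset.image_singleton]
  have hr : ∀ i j : Fin 4, ({i,j} : Finset (Fin 4)) ∈ T1.E 0 →
      ((f i : ℕ) < n/2 ∨ (f j : ℕ) < n/2) := by
    intro i j hij
    have h := hE 0 _ hij
    rw [himg, consG_E0] at h
    have h2 := (Finset.mem_filter.mp h).2
    by_contra hcon
    push_neg at hcon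
    refine h2 ?_
    intro x hx
    simp only [Finset.mem_insert, Finset.mem_singleton] at hx
    simp only [Finset.mem_filter, Finset.mem_univ, true_and]
    rcases hx with rfl | rfl
    exacts [not_lt.mpr hcon.1, not_lt.mpr hcon.2]
  have hb : ∀ i j : Fin 4, ({i,j} : Finset (Fin 4)) ∈ T1.E 1 →
      ¬ ((f i : ℕ) < n/2 ∧ (f j : ℕ) < n/2) := by
    intro i j hij hcon
    have h := hE 1 _ hij
    rw [himg, consG_E1] at h
    have h2 := (Finset.mem_filter.mp h).2
    refine h2 ?_
    intro x hx
    simp only [Finset.mem_insert, Finset.mem_singleton] at hx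
    simp only [Finset.mem_filter, Finset.mem_univ, true_and]
    rcases hx with rfl | rfl
    exacts [hcon.1, hcon.2]
  have hr01 := hr 0 1 (by decide)
  have hr23 := hr 2 3 (by decide)
  have hr02 := hr 0 2 (by decide)
  have hr13 := hr 1 3 (by decide)
  have hb01 := hb 0 1 (by decide)
  have hb23 := hb 2 3 (by decide)
  have hb03 := hb 0 3 (by decide)
  have hb12 := hb 1 2 (by decide)
  tauto

lemma filter_lt_card (n k : ℕ) (hk : k ≤ n) :
    (Finset.univ.filter (fun v : Fin n => (v:ℕ) < k)).card = k := by
  have himg : (Finset.univ.filter (fun v : Fin n => (v:ℕ) < k)).image (Fin.val)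
      = Finset.range k := by
    ext m
    simp only [Finset.mem_image, Finset.mem_filter, Finset.mem_univ, true_and,
      Finset.mem_range]
    constructor
    · rintro ⟨v, hv, rfl⟩; exact hv
    · intro hm; exact ⟨⟨m, lt_of_lt_of_le hm hk⟩, hm, rfl⟩
  have h2 := Finset.card_image_of_injective
    (Finset.univ.filter (fun v : Fin n => (v:ℕ) < k)) Fin.val_injective
  rw [himg, Finset.card_range] at h2
  omega

lemma choose_split (a b : ℕ) : (a + b).choose 2 = a.choose 2 + b.choose 2 + a * b := by
  induction b with
  | zero => simp
  | succ m ihm =>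
    have h1 : a + (m+1) = (a + m) + 1 := by ring
    rw [h1, Nat.choose_succ_succ (a+m) 1, Nat.choose_one_right, ihm,
      Nat.choose_succ_succ m 1, Nat.choose_one_right]
    have h2 : a * (m+1) = a * m + a := by ring
    simp only [show Nat.succ 1 = 2 from rfl] at *
    omega

lemma half_mul (n : ℕ) : (n/2) * (n - n/2) = n^2/4 := by
  obtain ⟨h, rfl | rfl⟩ := Nat.even_or_odd' n
  · have h1 : (2*h)^2 = 4*(h*h) := by ring
    have h2 : (2*h)/2 = h := by omega
    have h3 : 2*h - h = h := by omega
    rw [h2, h1, h3]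
    omega
  · have h1 : (2*h+1)^2 = 4*(h*h+h)+1 := by ring
    have h2 : (2*h+1)/2 = h := by omega
    have h3 : 2*h+1-h = h+1 := by omega
    have h4 : h*(h+1) = h*h + h := by ring
    rw [h2, h1, h3, h4]
    omega

lemma consG_count (n : ℕ) :
    ((consG n).E 0).card + ((consG n).E 1).card = n.choose 2 + n^2/4 := by
  classical
  have key : ∀ (C : Finset (Fin n)),
      ((Finset.powersetCard 2 (Finset.univ : Finset (Fin n))).filter (fun e => e ⊆ C))
        = Finset.powersetCard 2 C := by
    intro C
    ext e
    simp only [Finset.mem_filter, Finset.mem_powersetCard]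
    constructor
    · rintro ⟨⟨-, h2⟩, h3⟩; exact ⟨h3, h2⟩
    · rintro ⟨h1, h2⟩; exact ⟨⟨Finset.subset_univ _, h2⟩, h1⟩
  have hP : (Finset.powersetCard 2 (Finset.univ : Finset (Fin n))).card = n.choose 2 := by
    rw [Finset.card_powersetCard, Finset.card_univ, Fintype.card_fin]
  have hA : (Finset.univ.filter (fun v : Fin n => (v:ℕ) < n/2)).card = n/2 :=
    filter_lt_card n (n/2) (Nat.div_le_self _ _)
  have hAB := Finset.card_filter_add_card_filter_not
    (s := (Finset.univ : Finset (Fin n))) (p := fun v : Fin n => (v:ℕ) < n/2)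
  rw [Finset.card_univ, Fintype.card_fin, hA] at hAB
  have hB : (Finset.univ.filter (fun v : Fin n => ¬ (v:ℕ) < n/2)).card = n - n/2 := by omega
  have hsplit0 := Finset.card_filter_add_card_filter_not
    (s := Finset.powersetCard 2 (Finset.univ : Finset (Fin n)))
    (p := fun e => e ⊆ Finset.univ.filter (fun v : Fin n => ¬ (v:ℕ) < n/2))
  rw [key, hP, Finset.card_powersetCard, hB] at hsplit0
  have hsplit1 := Finset.card_filter_add_card_filter_not
    (s := Finset.powersetCard 2 (Finset.univ : Finset (Fin n)))
    (p := fun e => e ⊆ Finset.univ.filter (fun v : Fin n => (v:ℕ) < n/2))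
  rw [key, hP, Finset.card_powersetCard, hA] at hsplit1
  have hch : n.choose 2 = (n/2).choose 2 + (n - n/2).choose 2 + (n/2) * (n - n/2) := by
    have h : n/2 + (n - n/2) = n := by omega
    conv_lhs => rw [← h]
    exact choose_split _ _
  have hm := half_mul n
  rw [consG_E0, consG_E1, consR, consB]
  omega

end Assembly
section Final

lemma part1 (n : ℕ) (h3 : n ≠ 3) :
    IsGreatest {N : ℕ | ∃ G : ColGraph 2 2 n, ¬ T1.IsSubgraph G ∧
      (G.E 0).card + (G.E 1).card = N} (n.choose 2 + n ^ 2 / 4) := by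
  constructor
  · exact ⟨consG n, consG_free n, consG_count n⟩
  · rintro N ⟨G, hfree, rfl⟩
    exact upper_bound_s7 G hfree h3

def full3 : ColGraph 2 2 3 :=
  mk2 (Finset.powersetCard 2 Finset.univ) (Finset.powersetCard 2 Finset.univ)
    (fun e he => (Finset.mem_powersetCard.mp he).2)
    (fun e he => (Finset.mem_powersetCard.mp he).2)

lemma small_free {n : ℕ} (hn : n < 4) (G : ColGraph 2 2 n) : ¬ T1.IsSubgraph G := by
  rintro ⟨f, hinj, -⟩
  have h := Fintype.card_le_of_injective f hinj
  simp only [Fintype.card_fin] at h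
  omega

lemma part2 : IsGreatest {N : ℕ | ∃ G : ColGraph 2 2 3, ¬ T1.IsSubgraph G ∧
    (G.E 0).card + (G.E 1).card = N} 6 := by
  have hP : (Finset.powersetCard 2 (Finset.univ : Finset (Fin 3))).card = 3 := by
    rw [Finset.card_powersetCard, Finset.card_univ, Fintype.card_fin]
    rfl
  constructor
  · refine ⟨full3, small_free (by norm_num) _, ?_⟩
    show (Finset.powersetCard 2 (Finset.univ : Finset (Fin 3))).card
      + (Finset.powersetCard 2 (Finset.univ : Finset (Fin 3))).card = 6
    rw [hP]
  · rintro N ⟨G, -, rfl⟩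
    have g0 : (G.E 0).card ≤ (Finset.powersetCard 2 (Finset.univ : Finset (Fin 3))).card :=
      Finset.card_le_card (fun e he =>
        Finset.mem_powersetCard.mpr ⟨Finset.subset_univ _, G.card_mem 0 e he⟩)
    have g1 : (G.E 1).card ≤ (Finset.powersetCard 2 (Finset.univ : Finset (Fin 3))).card :=
      Finset.card_le_card (fun e he =>
        Finset.mem_powersetCard.mpr ⟨Finset.subset_univ _, G.card_mem 1 e he⟩)
    omega

lemma two_choose_two (n : ℕ) : 2 * n.choose 2 + n = n^2 := by
  induction n with
  | zero => norm_num
  | succ m ih =>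
    rw [Nat.choose_succ_succ m 1, Nat.choose_one_right]
    have h : (m+1)^2 = m^2 + 2*m + 1 := by ring
    simp only [show Nat.succ 1 = 2 from rfl] at *
    omega

lemma q_lower (n : ℕ) (hn : 4 ≤ n) : n.choose 2 ≤ 2 * (n^2/4) := by
  have h1 := two_choose_two n
  have h2 := Nat.div_add_mod (n^2) 4
  have h3 := sq_mod_four n
  omega

lemma q_upper (n : ℕ) : 4 * (n^2/4) ≤ n^2 := by
  have h2 := Nat.div_add_mod (n^2) 4
  omega

lemma cast_bounds (n : ℕ) (hn : 4 ≤ n) :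
    3/2 ≤ ((n.choose 2 + n^2/4 : ℕ) : ℝ)/(n.choose 2 : ℝ) ∧
    ((n.choose 2 + n^2/4 : ℕ) : ℝ)/(n.choose 2 : ℝ) ≤ 3/2 + 1/(n:ℝ) := by
  have hCpos : (0:ℝ) < (n.choose 2 : ℝ) := by
    exact_mod_cast Nat.choose_pos (show 2 ≤ n by omega)
  have hxpos : (0:ℝ) < (n:ℝ) := by positivity
  have hx4 : (4:ℝ) ≤ (n:ℝ) := by exact_mod_cast hn
  have hC : 2 * ((n.choose 2 : ℕ):ℝ) + (n:ℝ) = (n:ℝ)^2 := by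
    exact_mod_cast two_choose_two n
  have hql : ((n.choose 2 : ℕ):ℝ) ≤ 2 * ((n^2/4 : ℕ):ℝ) := by
    exact_mod_cast q_lower n hn
  have hqu : 4 * ((n^2/4 : ℕ):ℝ) ≤ (n:ℝ)^2 := by
    exact_mod_cast q_upper n
  constructor
  · rw [le_div_iff₀ hCpos]
    push_cast
    linarith
  · rw [div_le_iff₀ hCpos]
    have hexp : (3/2 + 1/(n:ℝ)) * ((n.choose 2 : ℕ):ℝ)
        = (3*(n:ℝ)*((n.choose 2:ℕ):ℝ) + 2*((n.choose 2:ℕ):ℝ))/(2*(n:ℝ)) := by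
      field_simp
    rw [hexp, le_div_iff₀ (by positivity)]
    push_cast
    nlinarith [mul_le_mul_of_nonneg_left hqu (le_of_lt hxpos),
      mul_nonneg (by linarith : (0:ℝ) ≤ (n:ℝ) - 2) (by linarith : (0:ℝ) ≤ (n:ℝ))]

lemma turan_eq (n : ℕ) (hn : 4 ≤ n) :
    T1.turanDensityN n = ((n.choose 2 + n^2/4 : ℕ) : ℝ)/(n.choose 2 : ℝ) := by
  have hCpos : (0:ℝ) < (n.choose 2 : ℝ) := by
    exact_mod_cast Nat.choose_pos (show 2 ≤ n by omega)
  apply IsGreatest.csSup_eq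
  constructor
  · refine ⟨consG n, consG_free n, ?_⟩
    rw [ColGraph.density, Fin.sum_univ_two, ← Nat.cast_add, consG_count n]
  · rintro x ⟨G, hfree, rfl⟩
    rw [ColGraph.density, Fin.sum_univ_two, ← Nat.cast_add]
    have h := upper_bound_s7 G hfree (by omega)
    gcongr

lemma part3 : Filter.Tendsto T1.turanDensityN Filter.atTop (nhds (3 / 2)) := by
  have hub : Filter.Tendsto (fun n : ℕ => 3/2 + 1/(n:ℝ)) Filter.atTop (nhds (3/2)) := by
    have h1 := tendsto_one_div_atTop_nhds_zero_nat (𝕜 := ℝ)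
    have h2 := Filter.Tendsto.add (tendsto_const_nhds (x := (3/2 : ℝ)) (f := Filter.atTop)) h1
    simpa using h2
  refine tendsto_of_tendsto_of_tendsto_of_le_of_le' tendsto_const_nhds hub ?_ ?_
  · filter_upwards [Filter.eventually_ge_atTop 4] with n hn
    rw [turan_eq n hn]
    exact (cast_bounds n hn).1
  · filter_upwards [Filter.eventually_ge_atTop 4] with n hn
    rw [turan_eq n hn]
    exact (cast_bounds n hn).2

end Final

theorem T1_extremal :
    (∀ n : ℕ, 1 ≤ n → n ≠ 3 →
      IsGreatest {N : ℕ | ∃ G : ColGraph 2 2 n, ¬ T1.IsSubgraph G ∧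
          (G.E 0).card + (G.E 1).card = N} (n.choose 2 + n ^ 2 / 4)) ∧
    IsGreatest {N : ℕ | ∃ G : ColGraph 2 2 3, ¬ T1.IsSubgraph G ∧
        (G.E 0).card + (G.E 1).card = N} 6 ∧
    Filter.Tendsto T1.turanDensityN Filter.atTop (nhds (3 / 2)) :=
  ⟨fun n _ h3 => part1 n h3, part2, part3⟩
end

section
/- Let T_1 be the 2-colored graph with vertex set {1,2,3,4}, red edges {12, 34, 13, 24} and blue edges {12, 34, 14, 23}, and let T_2 be the 2-colored graph with vertex set {1,2,3,4}, red edges {12, 14, 23, 24, 34} and blue edges {12, 13, 14, 23, 34}. Then π({T_1, T_2}) ≤ 4/3: for every ε > 0 there exists n_0 such that for all n ≥ n_0, every 2-colored graph G on n vertices containing neither T_1 nor T_2 as a subgraph satisfies |E_r(G)| + |E_b(G)| ≤ (4/3 + ε)·C(n,2). -/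
open Finset Filter

namespace TTB
open Finset
variable {n : ℕ}

def cnt (S : Finset (Finset (Fin n))) (V : Finset (Fin n)) : ℕ :=
  (S.filter (fun e => e ⊆ V)).card

def cntAt (S : Finset (Finset (Fin n))) (V : Finset (Fin n)) (v : Fin n) : ℕ :=
  (S.filter (fun e => e ⊆ V ∧ v ∈ e)).card

def lossSet (S : Finset (Finset (Fin n))) (V T : Finset (Fin n)) : Finset (Finset (Fin n)) :=
  S.filter (fun e => e ⊆ V ∧ ¬ e ⊆ V \ T)

def nb (S : Finset (Finset (Fin n))) (V : Finset (Fin n)) (v : Fin n) : Finset (Fin n) :=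
  V.filter (fun t => t ≠ v ∧ ({v, t} : Finset (Fin n)) ∈ S)

lemma nb_subset (S : Finset (Finset (Fin n))) (V : Finset (Fin n)) (v : Fin n) :
    nb S V v ⊆ V := filter_subset _ _

lemma mem_nb {S : Finset (Finset (Fin n))} {V : Finset (Fin n)} {v t : Fin n} :
    t ∈ nb S V v ↔ t ∈ V ∧ t ≠ v ∧ ({v, t} : Finset (Fin n)) ∈ S := by
  simp [nb]

lemma cnt_split (S : Finset (Finset (Fin n))) (V T : Finset (Fin n)) :
    cnt S V = cnt S (V \ T) + (lossSet S V T).card := by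
  have h := Finset.card_filter_add_card_filter_not
    (s := S.filter (fun e => e ⊆ V)) (p := fun e => e ⊆ V \ T)
  rw [Finset.filter_filter, Finset.filter_filter] at h
  have h1 : S.filter (fun e => e ⊆ V ∧ e ⊆ V \ T) = S.filter (fun e => e ⊆ V \ T) := by
    apply Finset.filter_congr
    intro e _
    constructor
    · exact fun h => h.2
    · exact fun h => ⟨h.trans (sdiff_subset), h⟩
  rw [h1] at h
  unfold cnt lossSet
  omega

lemma loss_single (S : Finset (Finset (Fin n))) (V : Finset (Fin n)) (v : Fin n) :
    lossSet S V {v} = S.filter (fun e => e ⊆ V ∧ v ∈ e) := by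
  apply Finset.filter_congr
  intro e _
  rw [Finset.subset_sdiff]
  constructor
  · rintro ⟨h1, h2⟩
    refine ⟨h1, ?_⟩
    by_contra hv
    exact h2 ⟨h1, Finset.disjoint_singleton_right.mpr hv⟩
  · rintro ⟨h1, h2⟩
    refine ⟨h1, fun h => ?_⟩
    exact (Finset.disjoint_singleton_right.mp h.2) h2

lemma lossSet_pair_subset (S : Finset (Finset (Fin n))) (V : Finset (Fin n)) (u v : Fin n) :
    lossSet S V {u, v} ⊆ S.filter (fun e => e ⊆ V ∧ u ∈ e) ∪ S.filter (fun e => e ⊆ V ∧ v ∈ e) := by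
  intro e he
  rw [lossSet, Finset.mem_filter] at he
  obtain ⟨heS, heV, hnot⟩ := he
  rw [Finset.subset_sdiff] at hnot
  have : ¬ Disjoint e ({u, v} : Finset (Fin n)) := fun h => hnot ⟨heV, h⟩
  rw [Finset.disjoint_insert_right, Finset.disjoint_singleton_right] at this
  push_neg at this
  rcases Decidable.em (u ∈ e) with h | h
  · exact Finset.mem_union_left _ (Finset.mem_filter.mpr ⟨heS, heV, h⟩)
  · exact Finset.mem_union_right _ (Finset.mem_filter.mpr ⟨heS, heV, this h⟩)

lemma cntAt_subset_loss (S : Finset (Finset (Fin n))) (V T : Finset (Fin n)) (v : Fin n)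
    (hv : v ∈ T) : S.filter (fun e => e ⊆ V ∧ v ∈ e) ⊆ lossSet S V T := by
  intro e he
  rw [Finset.mem_filter] at he
  rw [lossSet, Finset.mem_filter]
  refine ⟨he.1, he.2.1, fun h => ?_⟩
  have := h he.2.2
  rw [Finset.mem_sdiff] at this
  exact this.2 hv

lemma cntAt_eq_nb_card (S : Finset (Finset (Fin n))) (V : Finset (Fin n)) (v : Fin n)
    (h2 : ∀ e ∈ S, e.card = 2) (hv : v ∈ V) : cntAt S V v = (nb S V v).card := by
  symm
  unfold cntAt
  apply Finset.card_bij (fun t _ => ({v, t} : Finset (Fin n)))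
  · intro t ht
    rw [mem_nb] at ht
    rw [Finset.mem_filter]
    refine ⟨ht.2.2, ?_, Finset.mem_insert_self _ _⟩
    intro a ha
    rcases Finset.mem_insert.mp ha with rfl | ha
    · exact hv
    · rw [Finset.mem_singleton] at ha; subst ha; exact ht.1
  · intro a ha b hb hab
    rw [mem_nb] at ha hb
    have : a ∈ ({v, b} : Finset (Fin n)) := by rw [← hab]; simp
    rcases Finset.mem_insert.mp this with h | h
    · exact absurd h ha.2.1
    · exact Finset.mem_singleton.mp h
  · intro e he
    rw [Finset.mem_filter] at he
    obtain ⟨heS, heV, hve⟩ := he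
    obtain ⟨a, b, hab, rfl⟩ := Finset.card_eq_two.mp (h2 e heS)
    have ha : a ∈ V := heV (by simp)
    have hb : b ∈ V := heV (by simp)
    rcases Finset.mem_insert.mp hve with rfl | hv'
    · refine ⟨b, ?_, rfl⟩
      rw [mem_nb]
      exact ⟨hb, hab.symm, heS⟩
    · rw [Finset.mem_singleton] at hv'
      subst hv'
      refine ⟨a, ?_, ?_⟩
      · rw [mem_nb]
        exact ⟨ha, hab, by rwa [Finset.pair_comm]⟩
      · rw [Finset.pair_comm]

end TTB

namespace TTB
open Finset
variable {n : ℕ}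

lemma triangle_step (Dset Nset : Finset (Finset (Fin n)))
    (hD2 : ∀ e ∈ Dset, e.card = 2)
    (hDN : ∀ e ∈ Dset, e ∉ Nset)
    (hP : ∀ x y u w : Fin n, x ≠ y → x ≠ u → x ≠ w → y ≠ u → y ≠ w → u ≠ w →
      ({x,u} : Finset (Fin n)) ∈ Dset → ({x,w} : Finset (Fin n)) ∈ Dset →
      ({y,u} : Finset (Fin n)) ∈ Dset → ({y,w} : Finset (Fin n)) ∈ Dset →
      ({x,y} : Finset (Fin n)) ∈ Nset ∨ ({u,w} : Finset (Fin n)) ∈ Nset)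
    (V : Finset (Fin n)) (x y z : Fin n) (hx : x ∈ V) (hy : y ∈ V) (hz : z ∈ V)
    (hxy : x ≠ y) (hxz : x ≠ z) (hyz : y ≠ z)
    (exy : ({x,y} : Finset (Fin n)) ∈ Dset)
    (exz : ({x,z} : Finset (Fin n)) ∈ Dset)
    (eyz : ({y,z} : Finset (Fin n)) ∈ Dset) :
    (lossSet Dset V {x,y,z}).card ≤ V.card + (lossSet Nset V {x,y,z}).card := by
  classical
  set T : Finset (Fin n) := {x, y, z} with hT
  have hxT : x ∈ T := by simp [hT]
  have hyT : y ∈ T := by simp [hT]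
  have hzT : z ∈ T := by simp [hT]
  set Ex := Dset.filter (fun e => e ⊆ V ∧ x ∈ e) with hEx
  set Ey := Dset.filter (fun e => e ⊆ V ∧ y ∈ e) with hEy
  set Ez := Dset.filter (fun e => e ⊆ V ∧ z ∈ e) with hEz
  -- membership helper
  have hpairV : ∀ a b : Fin n, a ∈ V → b ∈ V → ({a,b} : Finset (Fin n)) ⊆ V := by
    intro a b ha hb
    rw [Finset.insert_subset_iff, Finset.singleton_subset_iff]
    exact ⟨ha, hb⟩
  have hmemxy : ({x,y} : Finset (Fin n)) ∈ Ex ∩ Ey := by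
    simp only [hEx, hEy, Finset.mem_inter, Finset.mem_filter]
    exact ⟨⟨exy, hpairV x y hx hy, by simp⟩, ⟨exy, hpairV x y hx hy, by simp⟩⟩
  have hmemxz : ({x,z} : Finset (Fin n)) ∈ Ex ∩ Ez := by
    simp only [hEx, hEz, Finset.mem_inter, Finset.mem_filter]
    exact ⟨⟨exz, hpairV x z hx hz, by simp⟩, ⟨exz, hpairV x z hx hz, by simp⟩⟩
  have hmemyz : ({y,z} : Finset (Fin n)) ∈ Ey ∩ Ez := by
    simp only [hEy, hEz, Finset.mem_inter, Finset.mem_filter]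
    exact ⟨⟨eyz, hpairV y z hy hz, by simp⟩, ⟨eyz, hpairV y z hy hz, by simp⟩⟩
  have hcardT : (3 : ℕ) ≤ T.card → True := fun _ => trivial
  -- disjointness of (Ex ∩ Ez) and (Ey ∩ Ez)
  have hdisj : Disjoint (Ex ∩ Ez) (Ey ∩ Ez) := by
    rw [Finset.disjoint_left]
    intro e he1 he2
    simp only [hEx, hEy, hEz, Finset.mem_inter, Finset.mem_filter] at he1 he2
    have hsub : ({x, y, z} : Finset (Fin n)) ⊆ e := by
      rw [Finset.insert_subset_iff, Finset.insert_subset_iff, Finset.singleton_subset_iff]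
      exact ⟨he1.1.2.2, he2.1.2.2, he1.2.2.2⟩
    have h3 : ({x, y, z} : Finset (Fin n)).card = 3 := by
      rw [Finset.card_insert_of_notMem (by simp [hxy, hxz]),
        Finset.card_insert_of_notMem (by simp [hyz]), Finset.card_singleton]
    have := Finset.card_le_card hsub
    rw [h3, hD2 e he1.1.1] at this
    omega
  -- step 1 : loss + 3 ≤ |Ex| + |Ey| + |Ez|
  have hlsub : lossSet Dset V T ⊆ Ex ∪ Ey ∪ Ez := by
    intro e he
    simp only [lossSet, Finset.mem_filter] at he
    obtain ⟨heS, heV, hnot⟩ := he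
    rw [Finset.subset_sdiff] at hnot
    have hnd : ¬ Disjoint e T := fun h => hnot ⟨heV, h⟩
    rw [Finset.not_disjoint_iff] at hnd
    obtain ⟨a, hae, haT⟩ := hnd
    simp only [hT, Finset.mem_insert, Finset.mem_singleton] at haT
    simp only [hEx, hEy, hEz, Finset.mem_union, Finset.mem_filter]
    rcases haT with rfl | rfl | rfl
    · exact Or.inl (Or.inl ⟨heS, heV, hae⟩)
    · exact Or.inl (Or.inr ⟨heS, heV, hae⟩)
    · exact Or.inr ⟨heS, heV, hae⟩
  have step1 : (lossSet Dset V T).card + 3 ≤ Ex.card + Ey.card + Ez.card := by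
    have h1 : (Ex ∪ Ey).card + (Ex ∩ Ey).card = Ex.card + Ey.card :=
      Finset.card_union_add_card_inter Ex Ey
    have h2 : (Ex ∪ Ey ∪ Ez).card + ((Ex ∪ Ey) ∩ Ez).card = (Ex ∪ Ey).card + Ez.card :=
      Finset.card_union_add_card_inter _ _
    have h3 : (Ex ∪ Ey) ∩ Ez = (Ex ∩ Ez) ∪ (Ey ∩ Ez) := Finset.union_inter_distrib_right _ _ _
    have h4 : ((Ex ∩ Ez) ∪ (Ey ∩ Ez)).card = (Ex ∩ Ez).card + (Ey ∩ Ez).card :=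
      Finset.card_union_of_disjoint hdisj
    have h5 : 1 ≤ (Ex ∩ Ey).card := Finset.card_pos.mpr ⟨_, hmemxy⟩
    have h6 : 1 ≤ (Ex ∩ Ez).card := Finset.card_pos.mpr ⟨_, hmemxz⟩
    have h7 : 1 ≤ (Ey ∩ Ez).card := Finset.card_pos.mpr ⟨_, hmemyz⟩
    have h8 : (lossSet Dset V T).card ≤ (Ex ∪ Ey ∪ Ez).card := Finset.card_le_card hlsub
    rw [h3, h4] at h2
    omega
  -- step 2: |Ex| = |A| etc.
  set A := nb Dset V x with hA
  set B := nb Dset V y with hB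
  set C := nb Dset V z with hC
  have e2x : Ex.card = A.card := cntAt_eq_nb_card Dset V x hD2 hx
  have e2y : Ey.card = B.card := cntAt_eq_nb_card Dset V y hD2 hy
  have e2z : Ez.card = C.card := cntAt_eq_nb_card Dset V z hD2 hz
  -- step 3
  have step3 : A.card + B.card + C.card ≤
      V.card + ((A ∩ B).card + (A ∩ C).card + (B ∩ C).card) := by
    have h1 : (A ∪ B).card + (A ∩ B).card = A.card + B.card :=
      Finset.card_union_add_card_inter A B
    have h2 : (A ∪ B ∪ C).card + ((A ∪ B) ∩ C).card = (A ∪ B).card + C.card :=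
      Finset.card_union_add_card_inter _ _
    have h3 : (A ∪ B) ∩ C = (A ∩ C) ∪ (B ∩ C) := Finset.union_inter_distrib_right _ _ _
    have h4 : ((A ∩ C) ∪ (B ∩ C)).card ≤ (A ∩ C).card + (B ∩ C).card := Finset.card_union_le _ _
    have h5 : (A ∪ B ∪ C).card ≤ V.card := by
      apply Finset.card_le_card
      intro t ht
      simp only [Finset.mem_union, hA, hB, hC, mem_nb] at ht
      rcases ht with (h | h) | h <;> exact h.1
    rw [h3] at h2
    omega
  -- step 4
  have hzAB : z ∈ A ∩ B := by
    rw [Finset.mem_inter, hA, hB, mem_nb, mem_nb]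
    exact ⟨⟨hz, Ne.symm hxz, exz⟩, ⟨hz, Ne.symm hyz, eyz⟩⟩
  have hxBC : x ∈ B ∩ C := by
    rw [Finset.mem_inter, hB, hC, mem_nb, mem_nb]
    exact ⟨⟨hx, hxy, by rwa [Finset.pair_comm]⟩, ⟨hx, hxz, by rwa [Finset.pair_comm]⟩⟩
  have hyAC : y ∈ A ∩ C := by
    rw [Finset.mem_inter, hA, hC, mem_nb, mem_nb]
    exact ⟨⟨hy, Ne.symm hxy, exy⟩, ⟨hy, hyz, by rwa [Finset.pair_comm]⟩⟩
  set F1 := ((A ∩ B).erase z).image (fun s => ({s, z} : Finset (Fin n))) with hF1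
  set F2 := ((B ∩ C).erase x).image (fun s => ({s, x} : Finset (Fin n))) with hF2
  set F3 := ((A ∩ C).erase y).image (fun s => ({s, y} : Finset (Fin n))) with hF3
  have injpair : ∀ (w : Fin n), Set.InjOn (fun s => ({s, w} : Finset (Fin n)))
      {s | s ≠ w} := by
    intro w s hs s' hs' h
    simp only [Set.mem_setOf_eq] at hs hs'
    simp only at h
    have : s ∈ ({s', w} : Finset (Fin n)) := h ▸ (Finset.mem_insert_self s {w})
    rcases Finset.mem_insert.mp this with h' | h'
    · exact h'
    · exact absurd (Finset.mem_singleton.mp h') hs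
  have cardF1 : F1.card + 1 = (A ∩ B).card := by
    rw [hF1, Finset.card_image_of_injOn (fun s hs s' hs' h => by
      apply injpair z _ _ h <;> simp only [Set.mem_setOf_eq]
      · exact Finset.ne_of_mem_erase (by assumption)
      · exact Finset.ne_of_mem_erase (by assumption))]
    exact Finset.card_erase_add_one hzAB
  have cardF2 : F2.card + 1 = (B ∩ C).card := by
    rw [hF2, Finset.card_image_of_injOn (fun s hs s' hs' h => by
      apply injpair x _ _ h <;> simp only [Set.mem_setOf_eq]
      · exact Finset.ne_of_mem_erase (by assumption)
      · exact Finset.ne_of_mem_erase (by assumption))]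
    exact Finset.card_erase_add_one hxBC
  have cardF3 : F3.card + 1 = (A ∩ C).card := by
    rw [hF3, Finset.card_image_of_injOn (fun s hs s' hs' h => by
      apply injpair y _ _ h <;> simp only [Set.mem_setOf_eq]
      · exact Finset.ne_of_mem_erase (by assumption)
      · exact Finset.ne_of_mem_erase (by assumption))]
    exact Finset.card_erase_add_one hyAC
  -- F1 ⊆ lossSet Nset V T
  have hmemloss : ∀ (a b : Fin n), a ∈ V → b ∈ V → b ∈ T →
      ({a, b} : Finset (Fin n)) ∈ Nset → ({a, b} : Finset (Fin n)) ∈ lossSet Nset V T := by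
    intro a b ha hb hbT hN
    rw [lossSet, Finset.mem_filter]
    refine ⟨hN, hpairV a b ha hb, fun h => ?_⟩
    have := h (by simp : b ∈ ({a,b} : Finset (Fin n)))
    rw [Finset.mem_sdiff] at this
    exact this.2 hbT
  have hsubF1 : F1 ⊆ lossSet Nset V T := by
    intro e he
    rw [hF1, Finset.mem_image] at he
    obtain ⟨s, hs, rfl⟩ := he
    have hsz : s ≠ z := Finset.ne_of_mem_erase hs
    have hs' := Finset.mem_of_mem_erase hs
    rw [Finset.mem_inter, hA, hB, mem_nb, mem_nb] at hs'
    obtain ⟨⟨hsV, hsx, hxs⟩, ⟨_, hsy, hys⟩⟩ := hs'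
    have := hP x y s z hxy (Ne.symm hsx) hxz (Ne.symm hsy) hyz hsz hxs exz hys eyz
    rcases this with h | h
    · exact absurd h (hDN _ exy)
    · exact hmemloss s z hsV hz hzT (by rwa [Finset.pair_comm] at h ⊢)
  have hsubF2 : F2 ⊆ lossSet Nset V T := by
    intro e he
    rw [hF2, Finset.mem_image] at he
    obtain ⟨s, hs, rfl⟩ := he
    have hsx : s ≠ x := Finset.ne_of_mem_erase hs
    have hs' := Finset.mem_of_mem_erase hs
    rw [Finset.mem_inter, hB, hC, mem_nb, mem_nb] at hs'
    obtain ⟨⟨hsV, hsy, hys⟩, ⟨_, hsz, hzs⟩⟩ := hs'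
    have := hP y z s x (hyz) (Ne.symm hsy) (Ne.symm hxy) (Ne.symm hsz) (Ne.symm hxz) hsx
      hys (by rwa [Finset.pair_comm] at exy) hzs (by rwa [Finset.pair_comm] at exz)
    rcases this with h | h
    · exact absurd h (hDN _ eyz)
    · exact hmemloss s x hsV hx hxT (by rwa [Finset.pair_comm] at h ⊢)
  have hsubF3 : F3 ⊆ lossSet Nset V T := by
    intro e he
    rw [hF3, Finset.mem_image] at he
    obtain ⟨s, hs, rfl⟩ := he
    have hsy : s ≠ y := Finset.ne_of_mem_erase hs
    have hs' := Finset.mem_of_mem_erase hs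
    rw [Finset.mem_inter, hA, hC, mem_nb, mem_nb] at hs'
    obtain ⟨⟨hsV, hsx, hxs⟩, ⟨_, hsz, hzs⟩⟩ := hs'
    have := hP x z s y hxz (Ne.symm hsx) hxy (Ne.symm hsz) (Ne.symm hyz) hsy
      hxs exy hzs (by rwa [Finset.pair_comm] at eyz)
    rcases this with h | h
    · exact absurd h (hDN _ exz)
    · exact hmemloss s y hsV hy hyT (by rwa [Finset.pair_comm] at h ⊢)
  -- pairwise disjoint
  have memF1 : ∀ e ∈ F1, z ∈ e ∧ ∀ t ∈ e, t = z ∨ (t ∉ T) := by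
    intro e he
    rw [hF1, Finset.mem_image] at he
    obtain ⟨s, hs, rfl⟩ := he
    have hsz : s ≠ z := Finset.ne_of_mem_erase hs
    have hs' := Finset.mem_of_mem_erase hs
    rw [Finset.mem_inter, hA, hB, mem_nb, mem_nb] at hs'
    refine ⟨by simp, fun t ht => ?_⟩
    rcases Finset.mem_insert.mp ht with rfl | ht
    · right
      simp only [hT, Finset.mem_insert, Finset.mem_singleton]
      push_neg
      exact ⟨Ne.symm hs'.1.2.1.symm, hs'.2.2.1, hsz⟩
    · left; exact Finset.mem_singleton.mp ht
  have memF2 : ∀ e ∈ F2, x ∈ e ∧ ∀ t ∈ e, t = x ∨ (t ∉ T) := by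
    intro e he
    rw [hF2, Finset.mem_image] at he
    obtain ⟨s, hs, rfl⟩ := he
    have hsx : s ≠ x := Finset.ne_of_mem_erase hs
    have hs' := Finset.mem_of_mem_erase hs
    rw [Finset.mem_inter, hB, hC, mem_nb, mem_nb] at hs'
    refine ⟨by simp, fun t ht => ?_⟩
    rcases Finset.mem_insert.mp ht with rfl | ht
    · right
      simp only [hT, Finset.mem_insert, Finset.mem_singleton]
      push_neg
      exact ⟨hsx, hs'.1.2.1, hs'.2.2.1⟩
    · left; exact Finset.mem_singleton.mp ht
  have memF3 : ∀ e ∈ F3, y ∈ e ∧ ∀ t ∈ e, t = y ∨ (t ∉ T) := by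
    intro e he
    rw [hF3, Finset.mem_image] at he
    obtain ⟨s, hs, rfl⟩ := he
    have hsy : s ≠ y := Finset.ne_of_mem_erase hs
    have hs' := Finset.mem_of_mem_erase hs
    rw [Finset.mem_inter, hA, hC, mem_nb, mem_nb] at hs'
    refine ⟨by simp, fun t ht => ?_⟩
    rcases Finset.mem_insert.mp ht with rfl | ht
    · right
      simp only [hT, Finset.mem_insert, Finset.mem_singleton]
      push_neg
      exact ⟨hs'.1.2.1, hsy, hs'.2.2.1⟩
    · left; exact Finset.mem_singleton.mp ht
  have d12 : Disjoint F1 F2 := by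
    rw [Finset.disjoint_left]
    intro e h1 h2
    obtain ⟨hz1, -⟩ := memF1 e h1
    obtain ⟨-, hall⟩ := memF2 e h2
    rcases hall z hz1 with h | h
    · exact hxz h.symm
    · exact h hzT
  have d13 : Disjoint F1 F3 := by
    rw [Finset.disjoint_left]
    intro e h1 h2
    obtain ⟨hz1, -⟩ := memF1 e h1
    obtain ⟨-, hall⟩ := memF3 e h2
    rcases hall z hz1 with h | h
    · exact hyz h.symm
    · exact h hzT
  have d23 : Disjoint F2 F3 := by
    rw [Finset.disjoint_left]
    intro e h1 h2
    obtain ⟨hx1, -⟩ := memF2 e h1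
    obtain ⟨-, hall⟩ := memF3 e h2
    rcases hall x hx1 with h | h
    · exact hxy h
    · exact h hxT
  have dU : Disjoint (F1 ∪ F2) F3 := Finset.disjoint_union_left.mpr ⟨d13, d23⟩
  have cardU : (F1 ∪ F2 ∪ F3).card = F1.card + F2.card + F3.card := by
    rw [Finset.card_union_of_disjoint dU, Finset.card_union_of_disjoint d12]
  have hUsub : F1 ∪ F2 ∪ F3 ⊆ lossSet Nset V T :=
    Finset.union_subset (Finset.union_subset hsubF1 hsubF2) hsubF3
  have final : F1.card + F2.card + F3.card ≤ (lossSet Nset V T).card :=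
    cardU ▸ Finset.card_le_card hUsub
  omega

theorem key (Dset Nset : Finset (Finset (Fin n)))
    (hD2 : ∀ e ∈ Dset, e.card = 2)
    (hN2 : ∀ e ∈ Nset, e.card = 2)
    (hDN : ∀ e ∈ Dset, e ∉ Nset)
    (hP : ∀ x y u w : Fin n, x ≠ y → x ≠ u → x ≠ w → y ≠ u → y ≠ w → u ≠ w →
      ({x,u} : Finset (Fin n)) ∈ Dset → ({x,w} : Finset (Fin n)) ∈ Dset →
      ({y,u} : Finset (Fin n)) ∈ Dset → ({y,w} : Finset (Fin n)) ∈ Dset →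
      ({x,y} : Finset (Fin n)) ∈ Nset ∨ ({u,w} : Finset (Fin n)) ∈ Nset) :
    ∀ V : Finset (Fin n),
      6 * cnt Dset V ≤ 6 * cnt Nset V + V.card * V.card + 12 * V.card := by
  classical
  intro V
  induction V using Finset.strongInduction with
  | _ V IH =>
  by_cases hne : (Dset.filter (fun e => e ⊆ V)).Nonempty
  swap
  · have h0 : cnt Dset V = 0 := by
      unfold cnt
      rw [Finset.not_nonempty_iff_eq_empty.mp hne, Finset.card_empty]
    omega
  by_cases htri : ∃ x ∈ V, ∃ y ∈ V, ∃ z ∈ V, x ≠ y ∧ x ≠ z ∧ y ≠ z ∧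
      ({x,y} : Finset (Fin n)) ∈ Dset ∧ ({x,z} : Finset (Fin n)) ∈ Dset ∧
      ({y,z} : Finset (Fin n)) ∈ Dset
  · -- triangle removal
    obtain ⟨x, hx, y, hy, z, hz, hxy, hxz, hyz, exy, exz, eyz⟩ := htri
    set T : Finset (Fin n) := {x, y, z} with hT
    have hTsub : T ⊆ V := by
      rw [hT, Finset.insert_subset_iff, Finset.insert_subset_iff,
        Finset.singleton_subset_iff]
      exact ⟨hx, hy, hz⟩
    have hTne : T.Nonempty := ⟨x, by simp [hT]⟩
    have hss : V \ T ⊂ V := Finset.sdiff_ssubset hTsub hTne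
    have IH' := IH (V \ T) hss
    have hsplitD := cnt_split Dset V T
    have hsplitN := cnt_split Nset V T
    have htstep := triangle_step Dset Nset hD2 hDN hP V x y z hx hy hz hxy hxz hyz exy exz eyz
    have h3 : T.card = 3 := by
      rw [hT, Finset.card_insert_of_notMem (by simp [hxy, hxz]),
        Finset.card_insert_of_notMem (by simp [hyz]), Finset.card_singleton]
    have hc : (V \ T).card + 3 = V.card := by
      rw [Finset.card_sdiff_of_subset hTsub, h3]
      have := Finset.card_le_card hTsub
      omega
    set d := (V \ T).card
    have hq : V.card * V.card = d * d + 6 * d + 9 := by rw [← hc]; ring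
    rw [hT] at hsplitD hsplitN
    linarith [hsplitD, hsplitN, htstep, IH', hq]
  · -- triangle-free
    push_neg at htri
    by_cases hvert : ∃ v ∈ V, 6 * cntAt Dset V v ≤ 6 * cntAt Nset V v + 2 * V.card + 11
    · -- light vertex removal
      obtain ⟨v, hv, hlight⟩ := hvert
      set T : Finset (Fin n) := {v} with hT
      have hTsub : T ⊆ V := Finset.singleton_subset_iff.mpr hv
      have hss : V \ T ⊂ V := Finset.sdiff_ssubset hTsub ⟨v, by simp [hT]⟩
      have IH' := IH (V \ T) hss
      have hsplitD := cnt_split Dset V T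
      have hsplitN := cnt_split Nset V T
      have hlossD : (lossSet Dset V T).card = cntAt Dset V v := by
        rw [hT, loss_single]; rfl
      have hlossN : (lossSet Nset V T).card = cntAt Nset V v := by
        rw [hT, loss_single]; rfl
      have hc : (V \ T).card + 1 = V.card := by
        rw [Finset.card_sdiff_of_subset hTsub, hT, Finset.card_singleton]
        have := Finset.card_le_card hTsub
        rw [hT, Finset.card_singleton] at this
        omega
      set d := (V \ T).card
      have hq : V.card * V.card = d * d + 2 * d + 1 := by rw [← hc]; ring
      linarith [hsplitD, hsplitN, IH', hq, hlight, hlossD, hlossN]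
    · -- all vertices heavy; take an edge
      push_neg at hvert
      obtain ⟨e, he⟩ := hne
      rw [Finset.mem_filter] at he
      obtain ⟨heD, heV⟩ := he
      obtain ⟨u, v, huv, rfl⟩ := Finset.card_eq_two.mp (hD2 _ heD)
      have hu : u ∈ V := heV (by simp)
      have hv : v ∈ V := heV (by simp)
      set A := nb Dset V v with hA
      set B := nb Dset V u with hB
      have huA : u ∈ A := mem_nb.mpr ⟨hu, huv, by rwa [Finset.pair_comm]⟩
      have hvB : v ∈ B := mem_nb.mpr ⟨hv, Ne.symm huv, heD⟩
      have hdisjAB : Disjoint A B := by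
        rw [Finset.disjoint_left]
        intro t htA htB
        rw [hA, mem_nb] at htA
        rw [hB, mem_nb] at htB
        exact htri u hu v hv t htA.1 huv (Ne.symm htB.2.1) (Ne.symm htA.2.1) heD
          htB.2.2 htA.2.2
      have hABcard : A.card + B.card ≤ V.card := by
        rw [← Finset.card_union_of_disjoint hdisjAB]
        exact Finset.card_le_card (Finset.union_subset (nb_subset _ _ _) (nb_subset _ _ _))
      have hcAD : cntAt Dset V v = A.card := cntAt_eq_nb_card Dset V v hD2 hv
      have hcBD : cntAt Dset V u = B.card := cntAt_eq_nb_card Dset V u hD2 hu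
      have heavyu := hvert u hu
      have heavyv := hvert v hv
      by_cases hcase : ∀ t ∈ A.erase u, ({u, t} : Finset (Fin n)) ∈ Nset
      · -- impossible
        exfalso
        have hsubN : A.erase u ⊆ nb Nset V u := by
          intro t ht
          have htA := Finset.mem_of_mem_erase ht
          rw [hA, mem_nb] at htA
          exact mem_nb.mpr ⟨htA.1, Finset.ne_of_mem_erase ht, hcase t ht⟩
        have h1 : A.card ≤ (nb Nset V u).card + 1 := by
          have := Finset.card_le_card hsubN
          have h2 := Finset.card_erase_add_one huA
          omega
        have hcNu : cntAt Nset V u = (nb Nset V u).card := cntAt_eq_nb_card Nset V u hN2 hu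
        rw [hcBD, hcNu] at heavyu
        rw [hcAD] at heavyv
        have hNv : 0 ≤ cntAt Nset V v := Nat.zero_le _
        omega
      · -- case (i)
        push_neg at hcase
        obtain ⟨x, hxmem, hxN⟩ := hcase
        have hxu : x ≠ u := Finset.ne_of_mem_erase hxmem
        have hxA := Finset.mem_of_mem_erase hxmem
        rw [hA, mem_nb] at hxA
        obtain ⟨hxV, hxv, hvx⟩ := hxA
        set Sx := nb Dset V x with hSx
        have hSxA : ∀ t ∈ Sx, t ∉ A := by
          intro t htS htA
          rw [hSx, mem_nb] at htS
          rw [hA, mem_nb] at htA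
          exact htri v hv x hxV t htS.1 (Ne.symm hxv) (Ne.symm htA.2.1) (Ne.symm htS.2.1)
            hvx htA.2.2 htS.2.2
        have hSxB : Sx ∩ B ⊆ insert v (nb Nset V v) := by
          intro t ht
          rw [Finset.mem_inter] at ht
          obtain ⟨htS, htB⟩ := ht
          rw [hSx, mem_nb] at htS
          rw [hB, mem_nb] at htB
          by_cases htv : t = v
          · exact Finset.mem_insert.mpr (Or.inl htv)
          · refine Finset.mem_insert.mpr (Or.inr ?_)
            have := hP u x t v (Ne.symm hxu) (Ne.symm htB.2.1) huv (Ne.symm htS.2.1)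
              hxv htv htB.2.2 heD htS.2.2 (by rwa [Finset.pair_comm])
            rcases this with h | h
            · exact absurd h hxN
            · exact mem_nb.mpr ⟨htS.1, htv, by rwa [Finset.pair_comm] at h⟩
        have hSxsub : Sx ⊆ (Sx ∩ B) ∪ (V \ (A ∪ B)) := by
          intro t ht
          by_cases htB : t ∈ B
          · exact Finset.mem_union_left _ (Finset.mem_inter.mpr ⟨ht, htB⟩)
          · refine Finset.mem_union_right _ (Finset.mem_sdiff.mpr ⟨?_, ?_⟩)
            · exact nb_subset _ _ _ ht
            · rw [Finset.mem_union]
              push_neg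
              exact ⟨hSxA t ht, htB⟩
        have hcard1 : Sx.card ≤ (Sx ∩ B).card + (V \ (A ∪ B)).card :=
          le_trans (Finset.card_le_card hSxsub) (Finset.card_union_le _ _)
        have hcard2 : (Sx ∩ B).card ≤ (nb Nset V v).card + 1 :=
          le_trans (Finset.card_le_card hSxB) (Finset.card_insert_le _ _)
        have hcard3 : (V \ (A ∪ B)).card + (A.card + B.card) = V.card := by
          rw [← Finset.card_union_of_disjoint hdisjAB]
          exact Finset.card_sdiff_add_card_eq_card
            (Finset.union_subset (nb_subset _ _ _) (nb_subset _ _ _))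
        have heavyx := hvert x hxV
        have hcSxD : cntAt Dset V x = Sx.card := cntAt_eq_nb_card Dset V x hD2 hxV
        have hcNv : cntAt Nset V v = (nb Nset V v).card := cntAt_eq_nb_card Nset V v hN2 hv
        -- removal of {u, v}
        set T : Finset (Fin n) := {u, v} with hT
        have hTsub : T ⊆ V := by
          rw [hT, Finset.insert_subset_iff, Finset.singleton_subset_iff]
          exact ⟨hu, hv⟩
        have hss : V \ T ⊂ V := Finset.sdiff_ssubset hTsub ⟨u, by simp [hT]⟩
        have IH' := IH (V \ T) hss
        have hsplitD := cnt_split Dset V T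
        have hsplitN := cnt_split Nset V T
        have hlossD : (lossSet Dset V T).card ≤ B.card + A.card := by
          rw [← hcAD, ← hcBD]
          calc (lossSet Dset V T).card
              ≤ ((Dset.filter (fun e => e ⊆ V ∧ u ∈ e)) ∪
                  (Dset.filter (fun e => e ⊆ V ∧ v ∈ e))).card := by
                rw [hT]; exact Finset.card_le_card (lossSet_pair_subset Dset V u v)
            _ ≤ cntAt Dset V u + cntAt Dset V v := Finset.card_union_le _ _
        have hlossN : cntAt Nset V v ≤ (lossSet Nset V T).card := by
          apply Finset.card_le_card
          apply cntAt_subset_loss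
          simp [hT]
        have hc : (V \ T).card + 2 = V.card := by
          have h2 : T.card = 2 := by rw [hT]; exact Finset.card_pair huv
          rw [Finset.card_sdiff_of_subset hTsub, h2]
          have := Finset.card_le_card hTsub
          rw [h2] at this
          omega
        set d := (V \ T).card
        have hq : V.card * V.card = d * d + 4 * d + 4 := by rw [← hc]; ring
        rw [hcSxD] at heavyx
        rw [hcNv] at hlossN
        linarith [hsplitD, hsplitN, IH', hq, hlossD, hlossN, heavyx, hcard1, hcard2, hcard3,
          Nat.zero_le (cntAt Nset V x)]

end TTB

namespace TTB
open Finset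
variable {n : ℕ}

lemma image_pair (f : Fin 4 → Fin n) (i j : Fin 4) :
    ({i, j} : Finset (Fin 4)).image f = {f i, f j} := by
  simp [Finset.image_insert]

lemma inj4 (a b c d : Fin n) (hab : a ≠ b) (hac : a ≠ c) (had : a ≠ d)
    (hbc : b ≠ c) (hbd : b ≠ d) (hcd : c ≠ d) : Function.Injective ![a, b, c, d] := by
  intro s t h
  fin_cases s <;> fin_cases t <;> simp_all

lemma hP_of_free (G : ColGraph 2 2 n) (hT1 : ¬ T1.IsSubgraph G) (hT2 : ¬ T2.IsSubgraph G) :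
    ∀ x y u w : Fin n, x ≠ y → x ≠ u → x ≠ w → y ≠ u → y ≠ w → u ≠ w →
      ({x,u} : Finset (Fin n)) ∈ G.E 0 ∩ G.E 1 →
      ({x,w} : Finset (Fin n)) ∈ G.E 0 ∩ G.E 1 →
      ({y,u} : Finset (Fin n)) ∈ G.E 0 ∩ G.E 1 →
      ({y,w} : Finset (Fin n)) ∈ G.E 0 ∩ G.E 1 →
      ({x,y} : Finset (Fin n)) ∈ (Finset.univ.powersetCard 2) \ (G.E 0 ∪ G.E 1) ∨
      ({u,w} : Finset (Fin n)) ∈ (Finset.univ.powersetCard 2) \ (G.E 0 ∪ G.E 1) := by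
  intro x y u w hxy hxu hxw hyu hyw huw hdxu hdxw hdyu hdyw
  rw [Finset.mem_inter] at hdxu hdxw hdyu hdyw
  obtain ⟨dxu, dxu'⟩ := hdxu
  obtain ⟨dxw, dxw'⟩ := hdxw
  obtain ⟨dyu, dyu'⟩ := hdyu
  obtain ⟨dyw, dyw'⟩ := hdyw
  by_contra hcon
  push_neg at hcon
  obtain ⟨h1, h2⟩ := hcon
  have hxyU : ({x,y} : Finset (Fin n)) ∈ G.E 0 ∪ G.E 1 := by
    by_contra h
    exact h1 (Finset.mem_sdiff.mpr ⟨Finset.mem_powersetCard.mpr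
      ⟨Finset.subset_univ _, Finset.card_pair hxy⟩, h⟩)
  have huwU : ({u,w} : Finset (Fin n)) ∈ G.E 0 ∪ G.E 1 := by
    by_contra h
    exact h2 (Finset.mem_sdiff.mpr ⟨Finset.mem_powersetCard.mpr
      ⟨Finset.subset_univ _, Finset.card_pair huw⟩, h⟩)
  have hRmem : T1.E 0 = ({{0,1},{2,3},{0,2},{1,3}} : Finset (Finset (Fin 4))) := rfl
  have hBmem : T1.E 1 = ({{0,1},{2,3},{0,3},{1,2}} : Finset (Finset (Fin 4))) := rfl
  have hR2 : T2.E 0 = ({{0,1},{0,3},{1,2},{1,3},{2,3}} : Finset (Finset (Fin 4))) := rfl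
  have hB2 : T2.E 1 = ({{0,1},{0,2},{0,3},{1,2},{2,3}} : Finset (Finset (Fin 4))) := rfl
  rw [Finset.mem_union] at hxyU huwU
  rcases hxyU with hxy0 | hxy1 <;> rcases huwU with huw0 | huw1
  · -- both diagonals red : T1 with (x,u,y,w)
    refine hT1 ⟨![x,u,y,w], inj4 x u y w hxu hxy hxw (Ne.symm hyu) huw hyw, ?_⟩
    intro i
    fin_cases i <;> intro e he
    · replace he : e ∈ ({{0,1},{2,3},{0,2},{1,3}} : Finset (Finset (Fin 4))) := he
      simp only [Finset.mem_insert, Finset.mem_singleton] at he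
      rcases he with rfl|rfl|rfl|rfl <;> rw [image_pair] <;>
        simp only [Matrix.cons_val_zero, Matrix.cons_val_one, Matrix.head_cons,
          Matrix.cons_val_two, Matrix.tail_cons, Matrix.cons_val_three, Matrix.head_fin_const] <;>
        first
          | exact dxu | exact dyw | exact hxy0 | exact huw0
          | (rw [Finset.pair_comm]; first | exact dxu | exact dyw | exact hxy0 | exact huw0)
    · replace he : e ∈ ({{0,1},{2,3},{0,3},{1,2}} : Finset (Finset (Fin 4))) := he
      simp only [Finset.mem_insert, Finset.mem_singleton] at he
      rcases he with rfl|rfl|rfl|rfl <;> rw [image_pair] <;>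
        simp only [Matrix.cons_val_zero, Matrix.cons_val_one, Matrix.head_cons,
          Matrix.cons_val_two, Matrix.tail_cons, Matrix.cons_val_three, Matrix.head_fin_const] <;>
        first
          | exact dxu' | exact dyw' | exact dxw' | exact dyu'
          | (rw [Finset.pair_comm]; first | exact dxu' | exact dyw' | exact dxw' | exact dyu')
  · -- {x,y} red, {u,w} blue : T2 with (u,x,w,y)
    refine hT2 ⟨![u,x,w,y], inj4 u x w y (Ne.symm hxu) huw (Ne.symm hyu) hxw hxy (Ne.symm hyw), ?_⟩
    intro i
    fin_cases i <;> intro e he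
    · replace he : e ∈ ({{0,1},{0,3},{1,2},{1,3},{2,3}} : Finset (Finset (Fin 4))) := he
      simp only [Finset.mem_insert, Finset.mem_singleton] at he
      rcases he with rfl|rfl|rfl|rfl|rfl <;> rw [image_pair] <;>
        simp only [Matrix.cons_val_zero, Matrix.cons_val_one, Matrix.head_cons,
          Matrix.cons_val_two, Matrix.tail_cons, Matrix.cons_val_three, Matrix.head_fin_const] <;>
        first
          | exact dxu | exact dyw | exact dxw | exact dyu | exact hxy0
          | (rw [Finset.pair_comm]; first | exact dxu | exact dyw | exact dxw | exact dyu | exact hxy0)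
    · replace he : e ∈ ({{0,1},{0,2},{0,3},{1,2},{2,3}} : Finset (Finset (Fin 4))) := he
      simp only [Finset.mem_insert, Finset.mem_singleton] at he
      rcases he with rfl|rfl|rfl|rfl|rfl <;> rw [image_pair] <;>
        simp only [Matrix.cons_val_zero, Matrix.cons_val_one, Matrix.head_cons,
          Matrix.cons_val_two, Matrix.tail_cons, Matrix.cons_val_three, Matrix.head_fin_const] <;>
        first
          | exact dxu' | exact dyw' | exact dxw' | exact dyu' | exact huw1
          | (rw [Finset.pair_comm]; first | exact dxu' | exact dyw' | exact dxw' | exact dyu' | exact huw1)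
  · -- {x,y} blue, {u,w} red : T2 with (x,u,y,w)
    refine hT2 ⟨![x,u,y,w], inj4 x u y w hxu hxy hxw (Ne.symm hyu) huw hyw, ?_⟩
    intro i
    fin_cases i <;> intro e he
    · replace he : e ∈ ({{0,1},{0,3},{1,2},{1,3},{2,3}} : Finset (Finset (Fin 4))) := he
      simp only [Finset.mem_insert, Finset.mem_singleton] at he
      rcases he with rfl|rfl|rfl|rfl|rfl <;> rw [image_pair] <;>
        simp only [Matrix.cons_val_zero, Matrix.cons_val_one, Matrix.head_cons,
          Matrix.cons_val_two, Matrix.tail_cons, Matrix.cons_val_three, Matrix.head_fin_const] <;>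
        first
          | exact dxu | exact dyw | exact dxw | exact dyu | exact huw0
          | (rw [Finset.pair_comm]; first | exact dxu | exact dyw | exact dxw | exact dyu | exact huw0)
    · replace he : e ∈ ({{0,1},{0,2},{0,3},{1,2},{2,3}} : Finset (Finset (Fin 4))) := he
      simp only [Finset.mem_insert, Finset.mem_singleton] at he
      rcases he with rfl|rfl|rfl|rfl|rfl <;> rw [image_pair] <;>
        simp only [Matrix.cons_val_zero, Matrix.cons_val_one, Matrix.head_cons,
          Matrix.cons_val_two, Matrix.tail_cons, Matrix.cons_val_three, Matrix.head_fin_const] <;>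
        first
          | exact dxu' | exact dyw' | exact dxw' | exact dyu' | exact hxy1
          | (rw [Finset.pair_comm]; first | exact dxu' | exact dyw' | exact dxw' | exact dyu' | exact hxy1)
  · -- both diagonals blue : T1 with (x,u,w,y)
    refine hT1 ⟨![x,u,w,y], inj4 x u w y hxu hxw hxy huw (Ne.symm hyu) (Ne.symm hyw), ?_⟩
    intro i
    fin_cases i <;> intro e he
    · replace he : e ∈ ({{0,1},{2,3},{0,2},{1,3}} : Finset (Finset (Fin 4))) := he
      simp only [Finset.mem_insert, Finset.mem_singleton] at he
      rcases he with rfl|rfl|rfl|rfl <;> rw [image_pair] <;>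
        simp only [Matrix.cons_val_zero, Matrix.cons_val_one, Matrix.head_cons,
          Matrix.cons_val_two, Matrix.tail_cons, Matrix.cons_val_three, Matrix.head_fin_const] <;>
        first
          | exact dxu | exact dyw | exact dxw | exact dyu
          | (rw [Finset.pair_comm]; first | exact dxu | exact dyw | exact dxw | exact dyu)
    · replace he : e ∈ ({{0,1},{2,3},{0,3},{1,2}} : Finset (Finset (Fin 4))) := he
      simp only [Finset.mem_insert, Finset.mem_singleton] at he
      rcases he with rfl|rfl|rfl|rfl <;> rw [image_pair] <;>
        simp only [Matrix.cons_val_zero, Matrix.cons_val_one, Matrix.head_cons,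
          Matrix.cons_val_two, Matrix.tail_cons, Matrix.cons_val_three, Matrix.head_fin_const] <;>
        first
          | exact dxu' | exact dyw' | exact hxy1 | exact huw1
          | (rw [Finset.pair_comm]; first | exact dxu' | exact dyw' | exact hxy1 | exact huw1)

end TTB

theorem T1_T2_free_bound :
    ∀ ε : ℝ, 0 < ε → ∃ n₀ : ℕ, ∀ n : ℕ, n₀ ≤ n →
      ∀ G : ColGraph 2 2 n, ¬ T1.IsSubgraph G → ¬ T2.IsSubgraph G →
        ((G.E 0).card + (G.E 1).card : ℝ) ≤ (4 / 3 + ε) * (n.choose 2 : ℝ) := by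
  intro ε hε
  refine ⟨⌈(13 : ℝ) / (3 * ε)⌉₊ + 1, ?_⟩
  intro n hn G hT1 hT2
  classical
  set Dset := G.E 0 ∩ G.E 1 with hDdef
  set Uset := G.E 0 ∪ G.E 1 with hUdef
  set Nset := (Finset.univ.powersetCard 2) \ Uset with hNdef
  have hD2 : ∀ e ∈ Dset, e.card = 2 := fun e he => G.card_mem 0 e (Finset.mem_inter.mp he).1
  have hN2 : ∀ e ∈ Nset, e.card = 2 := by
    intro e he
    rw [hNdef, Finset.mem_sdiff, Finset.mem_powersetCard] at he
    exact he.1.2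
  have hDN : ∀ e ∈ Dset, e ∉ Nset := by
    intro e he hn'
    rw [hNdef, Finset.mem_sdiff] at hn'
    exact hn'.2 (Finset.mem_union_left _ (Finset.mem_inter.mp he).1)
  have hP := TTB.hP_of_free G hT1 hT2
  have hkey := TTB.key Dset Nset hD2 hN2 hDN (by
    intro x y u w h1 h2 h3 h4 h5 h6 e1 e2 e3 e4
    exact hP x y u w h1 h2 h3 h4 h5 h6 e1 e2 e3 e4) Finset.univ
  have hcntD : TTB.cnt Dset Finset.univ = Dset.card := by
    unfold TTB.cnt
    rw [Finset.filter_true_of_mem (fun e _ => Finset.subset_univ e)]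
  have hcntN : TTB.cnt Nset Finset.univ = Nset.card := by
    unfold TTB.cnt
    rw [Finset.filter_true_of_mem (fun e _ => Finset.subset_univ e)]
  rw [hcntD, hcntN, Finset.card_univ, Fintype.card_fin] at hkey
  have hUD : Uset.card + Dset.card = (G.E 0).card + (G.E 1).card :=
    Finset.card_union_add_card_inter _ _
  have hUsub : Uset ⊆ Finset.univ.powersetCard 2 := by
    intro e he
    rw [Finset.mem_powersetCard]
    refine ⟨Finset.subset_univ _, ?_⟩
    rcases Finset.mem_union.mp he with h | h
    · exact G.card_mem 0 e h
    · exact G.card_mem 1 e h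
  have hNU : Nset.card + Uset.card = n.choose 2 := by
    rw [hNdef, Finset.card_sdiff_add_card_eq_card hUsub, Finset.card_powersetCard,
      Finset.card_univ, Fintype.card_fin]
  have hnat : 6 * ((G.E 0).card + (G.E 1).card) ≤ 6 * n.choose 2 + n * n + 12 * n := by
    linarith [hkey, hUD, hNU]
  have hreal : ((G.E 0).card + (G.E 1).card : ℝ) ≤
      (n.choose 2 : ℝ) + ((n : ℝ) * n + 12 * n) / 6 := by
    have h := (Nat.cast_le (α := ℝ)).mpr hnat
    push_cast at h
    linarith
  have hchoose : ((n.choose 2 : ℕ) : ℝ) = (n : ℝ) * ((n : ℝ) - 1) / 2 := by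
    rw [Nat.cast_choose_two]
  have hn2 : ((⌈(13 : ℝ) / (3 * ε)⌉₊ : ℕ) : ℝ) + 1 ≤ (n : ℝ) := by
    exact_mod_cast hn
  have hn' : (13 : ℝ) / (3 * ε) ≤ (n : ℝ) - 1 := by
    have h1 : (13 : ℝ) / (3 * ε) ≤ (⌈(13 : ℝ) / (3 * ε)⌉₊ : ℝ) := Nat.le_ceil _
    linarith
  have h13 : (13 : ℝ) ≤ ((n : ℝ) - 1) * (3 * ε) :=
    (div_le_iff₀ (by positivity)).mp hn'
  have hn0 : (0 : ℝ) ≤ (n : ℝ) := Nat.cast_nonneg n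
  have hprod : 13 * (n : ℝ) ≤ (n : ℝ) * (((n : ℝ) - 1) * (3 * ε)) := by
    nlinarith [mul_le_mul_of_nonneg_left h13 hn0]
  calc ((G.E 0).card + (G.E 1).card : ℝ)
      ≤ (n.choose 2 : ℝ) + ((n : ℝ) * n + 12 * n) / 6 := hreal
    _ ≤ (4 / 3 + ε) * (n.choose 2 : ℝ) := by
        rw [hchoose]
        nlinarith [hprod]
end

section
/- Let H = (V, E_r, E_b) be a 2-colored graph and let H' be the {2,3}-graph with vertex set V ∪ {v}, where v is a new vertex not in V, whose 2-edges are E_2(H') = E_r and whose 3-edges are E_3(H') = { e ∪ {v} : e ∈ E_b }. Then for every n ≥ 3, every H'-free {2,3}-graph G on n vertices satisfies h_n(G) ≤ π_{n-1}(H), where π_{n-1}(H) is the maximum of h_{n-1} over all H-free 2-colored graphs on n−1 vertices. Consequently, if π_n(H) → c and the maximum density of H'-free {2,3}-graphs on n vertices tends to c', then c' ≤ c, i.e., π(H') ≤ π(H). -/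
open Finset Filter

section LiftProof

open Finset

/-! ### Auxiliary lemmas for `lift23_turan_density_le` -/

lemma colGraph_card_E_le {k r n : ℕ} (G : ColGraph k r n) (i : Fin k) :
    (G.E i).card ≤ n.choose r := by
  have hsub : G.E i ⊆ Finset.powersetCard r Finset.univ := by
    intro e he
    rw [Finset.mem_powersetCard]
    exact ⟨Finset.subset_univ e, G.card_mem i e he⟩
  calc (G.E i).card ≤ (Finset.powersetCard r (Finset.univ : Finset (Fin n))).card :=
        Finset.card_le_card hsub
    _ = n.choose r := by rw [Finset.card_powersetCard, Finset.card_univ, Fintype.card_fin]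

lemma colGraph_density_nonneg {k r n : ℕ} (G : ColGraph k r n) : 0 ≤ G.density := by
  unfold ColGraph.density
  apply div_nonneg _ (by positivity)
  exact Finset.sum_nonneg fun i _ => by positivity

lemma colGraph_density_le_k {k r n : ℕ} (G : ColGraph k r n) : G.density ≤ k := by
  unfold ColGraph.density
  rcases Nat.eq_zero_or_pos (n.choose r) with h | h
  · have hz : ∀ i : Fin k, (G.E i).card = 0 :=
      fun i => Nat.le_zero.mp (h ▸ colGraph_card_E_le G i)
    simp [hz]
  · rw [div_le_iff₀ (by exact_mod_cast h)]
    calc (∑ i : Fin k, ((G.E i).card : ℝ)) ≤ ∑ _i : Fin k, (n.choose r : ℝ) := by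
          apply Finset.sum_le_sum
          intro i _
          exact_mod_cast colGraph_card_E_le G i
      _ = (k : ℝ) * ((n.choose r : ℕ) : ℝ) := by
          rw [Finset.sum_const, Finset.card_univ, Fintype.card_fin, nsmul_eq_mul]

lemma turanDensityN_bddAbove {k r m : ℕ} (H : ColGraph k r m) (n : ℕ) :
    BddAbove {x : ℝ | ∃ G : ColGraph k r n, ¬ H.IsSubgraph G ∧ G.density = x} := by
  refine ⟨k, ?_⟩
  rintro x ⟨G, -, rfl⟩
  exact colGraph_density_le_k G

lemma turanDensityN_nonneg {k r m : ℕ} (H : ColGraph k r m) (n : ℕ) :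
    0 ≤ H.turanDensityN n := by
  unfold ColGraph.turanDensityN
  rcases Set.eq_empty_or_nonempty
      {x : ℝ | ∃ G : ColGraph k r n, ¬ H.IsSubgraph G ∧ G.density = x} with h | ⟨x, hx⟩
  · rw [h, Real.sSup_empty]
  · refine le_trans ?_ (le_csSup (turanDensityN_bddAbove H n) hx)
    obtain ⟨G, -, rfl⟩ := hx
    exact colGraph_density_nonneg G

/-- A (total) inverse to `Fin.succAbove v`. -/
noncomputable def invAbove {N : ℕ} (hN : 0 < N) (v : Fin (N + 1)) : Fin (N + 1) → Fin N :=
  fun x => if h : x = v then ⟨0, hN⟩ else (Fin.exists_succAbove_eq h).choose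

lemma succAbove_invAbove {N : ℕ} (hN : 0 < N) (v x : Fin (N + 1)) (h : x ≠ v) :
    v.succAbove (invAbove hN v x) = x := by
  rw [invAbove, dif_neg h]
  exact (Fin.exists_succAbove_eq h).choose_spec

lemma invAbove_succAbove {N : ℕ} (hN : 0 < N) (v : Fin (N + 1)) (i : Fin N) :
    invAbove hN v (v.succAbove i) = i :=
  Fin.succAbove_right_injective
    (succAbove_invAbove hN v _ (Fin.succAbove_ne v i))

/-- The link of a vertex `v` in a `{2,3}`-graph, as a 2-colored graph. -/
def link {N : ℕ} (G : Graph23 (N + 1)) (v : Fin (N + 1)) : ColGraph 2 2 N where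
  E i := (Finset.powersetCard 2 Finset.univ).filter (fun e =>
    if i = 0 then e.image v.succAbove ∈ G.E2 else insert v (e.image v.succAbove) ∈ G.E3)
  card_mem i e he := (Finset.mem_powersetCard.mp (Finset.mem_filter.mp he).1).2

lemma mem_link_zero {N : ℕ} {G : Graph23 (N + 1)} {v : Fin (N + 1)} {e : Finset (Fin N)} :
    e ∈ (link G v).E 0 ↔ e.card = 2 ∧ e.image v.succAbove ∈ G.E2 := by
  simp [link, Finset.mem_filter, Finset.mem_powersetCard, and_comm]

lemma mem_link_one {N : ℕ} {G : Graph23 (N + 1)} {v : Fin (N + 1)} {e : Finset (Fin N)} :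
    e ∈ (link G v).E 1 ↔ e.card = 2 ∧ insert v (e.image v.succAbove) ∈ G.E3 := by
  simp [link, Finset.mem_filter, Finset.mem_powersetCard, and_comm]

lemma link_free {m N : ℕ} (H : ColGraph 2 2 m) (G : Graph23 (N + 1))
    (hfree : ¬ (lift23 H).IsSubgraph G) (v : Fin (N + 1)) : ¬ H.IsSubgraph (link G v) := by
  rintro ⟨f, hf, hmaps⟩
  apply hfree
  set g : Fin (m + 1) → Fin (N + 1) := Fin.lastCases v (fun i => v.succAbove (f i)) with hgdef
  have hlast : g (Fin.last m) = v := Fin.lastCases_last ..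
  have hcast : ∀ i : Fin m, g (Fin.castSucc i) = v.succAbove (f i) :=
    fun i => Fin.lastCases_castSucc ..
  have hcomp : g ∘ Fin.castSucc = v.succAbove ∘ f := funext hcast
  refine ⟨g, ?_, ?_, ?_⟩
  · intro a b hab
    induction a using Fin.lastCases with
    | last =>
      induction b using Fin.lastCases with
      | last => rfl
      | cast j =>
        rw [hlast, hcast] at hab
        exact absurd hab.symm (Fin.succAbove_ne v (f j))
    | cast i =>
      induction b using Fin.lastCases with
      | last =>
        rw [hlast, hcast] at hab
        exact absurd hab (Fin.succAbove_ne v (f i))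
      | cast j =>
        rw [hcast, hcast] at hab
        exact congrArg Fin.castSucc (hf (Fin.succAbove_right_injective hab))
  · intro e' he'
    simp only [lift23, Finset.mem_image] at he'
    obtain ⟨e, he, rfl⟩ := he'
    rw [Finset.image_image, hcomp, ← Finset.image_image]
    exact (mem_link_zero.mp (hmaps 0 e he)).2
  · intro e' he'
    simp only [lift23, Finset.mem_image] at he'
    obtain ⟨e, he, rfl⟩ := he'
    rw [Finset.image_insert, hlast, Finset.image_image, hcomp, ← Finset.image_image]
    exact (mem_link_one.mp (hmaps 1 e he)).2

lemma link_card_zero {N : ℕ} (hN : 0 < N) (G : Graph23 (N + 1)) (v : Fin (N + 1)) :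
    ((link G v).E 0).card = (G.E2.filter (fun e => v ∉ e)).card := by
  apply Finset.card_nbij' (fun e => e.image v.succAbove) (fun t => t.image (invAbove hN v))
  · intro e he
    simp only [Finset.mem_coe] at he ⊢
    rw [mem_link_zero] at he
    rw [Finset.mem_filter]
    refine ⟨he.2, ?_⟩
    simp only [Finset.mem_image, not_exists]
    rintro x ⟨-, hx⟩
    exact Fin.succAbove_ne v x hx
  · intro t ht
    simp only [Finset.mem_coe] at ht ⊢
    rw [Finset.mem_filter] at ht
    have hne : ∀ x ∈ t, x ≠ v := fun x hx hxv => ht.2 (hxv ▸ hx)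
    have himg : (t.image (invAbove hN v)).image v.succAbove = t := by
      rw [Finset.image_image]
      rw [show t.image (v.succAbove ∘ invAbove hN v) = t.image id from
        Finset.image_congr fun x hx => succAbove_invAbove hN v x (hne x hx)]
      exact Finset.image_id
    rw [mem_link_zero]
    constructor
    · rw [Finset.card_image_of_injOn, G.card2 t ht.1]
      intro x hx y hy hxy
      have := congrArg v.succAbove hxy
      rwa [succAbove_invAbove hN v x (hne x hx), succAbove_invAbove hN v y (hne y hy)] at this
    · rw [himg]; exact ht.1
  · intro e he
    dsimp only
    rw [Finset.image_image]
    rw [show e.image (invAbove hN v ∘ v.succAbove) = e.image id from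
      Finset.image_congr fun x _ => invAbove_succAbove hN v x]
    exact Finset.image_id
  · intro t ht
    simp only [Finset.mem_coe] at ht ⊢
    rw [Finset.mem_filter] at ht
    have hne : ∀ x ∈ t, x ≠ v := fun x hx hxv => ht.2 (hxv ▸ hx)
    rw [Finset.image_image]
    rw [show t.image (v.succAbove ∘ invAbove hN v) = t.image id from
      Finset.image_congr fun x hx => succAbove_invAbove hN v x (hne x hx)]
    exact Finset.image_id

lemma link_card_one {N : ℕ} (hN : 0 < N) (G : Graph23 (N + 1)) (v : Fin (N + 1)) :
    ((link G v).E 1).card = (G.E3.filter (fun t => v ∈ t)).card := by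
  have himg_ne : ∀ e : Finset (Fin N), v ∉ e.image v.succAbove := by
    intro e h
    simp only [Finset.mem_image] at h
    obtain ⟨x, -, hx⟩ := h
    exact Fin.succAbove_ne v x hx
  apply Finset.card_nbij' (fun e => insert v (e.image v.succAbove))
    (fun t => (t.erase v).image (invAbove hN v))
  · intro e he
    simp only [Finset.mem_coe] at he ⊢
    rw [mem_link_one] at he
    rw [Finset.mem_filter]
    exact ⟨he.2, Finset.mem_insert_self v _⟩
  · intro t ht
    simp only [Finset.mem_coe] at ht ⊢
    rw [Finset.mem_filter] at ht
    have hne : ∀ x ∈ t.erase v, x ≠ v := fun x hx => (Finset.mem_erase.mp hx).1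
    have himg : ((t.erase v).image (invAbove hN v)).image v.succAbove = t.erase v := by
      rw [Finset.image_image]
      rw [show (t.erase v).image (v.succAbove ∘ invAbove hN v) = (t.erase v).image id from
        Finset.image_congr fun x hx => succAbove_invAbove hN v x (hne x hx)]
      exact Finset.image_id
    rw [mem_link_one]
    constructor
    · rw [Finset.card_image_of_injOn, Finset.card_erase_of_mem ht.2, G.card3 t ht.1]
      intro x hx y hy hxy
      have := congrArg v.succAbove hxy
      rwa [succAbove_invAbove hN v x (hne x hx), succAbove_invAbove hN v y (hne y hy)] at this
    · rw [himg, Finset.insert_erase ht.2]; exact ht.1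
  · intro e he
    dsimp only
    rw [Finset.erase_insert (himg_ne e), Finset.image_image]
    rw [show e.image (invAbove hN v ∘ v.succAbove) = e.image id from
      Finset.image_congr fun x _ => invAbove_succAbove hN v x]
    exact Finset.image_id
  · intro t ht
    simp only [Finset.mem_coe] at ht ⊢
    rw [Finset.mem_filter] at ht
    have hne : ∀ x ∈ t.erase v, x ≠ v := fun x hx => (Finset.mem_erase.mp hx).1
    rw [Finset.image_image]
    rw [show (t.erase v).image (v.succAbove ∘ invAbove hN v) = (t.erase v).image id from
      Finset.image_congr fun x hx => succAbove_invAbove hN v x (hne x hx)]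
    rw [Finset.image_id, Finset.insert_erase ht.2]

lemma sum_filter_not_mem {n : ℕ} (S : Finset (Finset (Fin n)))
    (hcard : ∀ e ∈ S, e.card = 2) :
    ∑ v : Fin n, (S.filter (fun e => v ∉ e)).card = (n - 2) * S.card := by
  calc ∑ v : Fin n, (S.filter (fun e => v ∉ e)).card
      = ∑ v : Fin n, ∑ e ∈ S, if v ∉ e then 1 else 0 :=
        Finset.sum_congr rfl fun v _ => Finset.card_filter _ _
    _ = ∑ e ∈ S, ∑ v : Fin n, if v ∉ e then 1 else 0 := Finset.sum_comm
    _ = ∑ e ∈ S, (n - 2) := by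
        refine Finset.sum_congr rfl fun e he => ?_
        rw [← Finset.card_filter]
        have : Finset.univ.filter (fun v : Fin n => v ∉ e) = eᶜ := by
          ext x; simp
        rw [this, Finset.card_compl, hcard e he, Fintype.card_fin]
    _ = (n - 2) * S.card := by rw [Finset.sum_const, smul_eq_mul, mul_comm]

lemma sum_filter_mem {n : ℕ} (S : Finset (Finset (Fin n)))
    (hcard : ∀ e ∈ S, e.card = 3) :
    ∑ v : Fin n, (S.filter (fun t => v ∈ t)).card = 3 * S.card := by
  calc ∑ v : Fin n, (S.filter (fun t => v ∈ t)).card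
      = ∑ v : Fin n, ∑ t ∈ S, if v ∈ t then 1 else 0 :=
        Finset.sum_congr rfl fun v _ => Finset.card_filter _ _
    _ = ∑ t ∈ S, ∑ v : Fin n, if v ∈ t then 1 else 0 := Finset.sum_comm
    _ = ∑ t ∈ S, 3 := by
        refine Finset.sum_congr rfl fun t ht => ?_
        rw [← Finset.card_filter]
        have : Finset.univ.filter (fun v : Fin n => v ∈ t) = t := by
          ext x; simp
        rw [this, hcard t ht]
    _ = 3 * S.card := by rw [Finset.sum_const, smul_eq_mul, mul_comm]

lemma sum_link_density {M : ℕ} (G : Graph23 (M + 3)) :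
    ((M : ℝ) + 3) * G.density = ∑ v : Fin (M + 3), (link G v).density := by
  have hN : 0 < M + 2 := by omega
  have hsum : ∀ v : Fin (M + 3), (link G v).density =
      (((G.E2.filter (fun e => v ∉ e)).card : ℝ) + ((G.E3.filter (fun t => v ∈ t)).card : ℝ))
        / ((M + 2).choose 2 : ℝ) := by
    intro v
    unfold ColGraph.density
    rw [Fin.sum_univ_two]
    rw [show ((link G v).E 0).card = (G.E2.filter (fun e => v ∉ e)).card from
      link_card_zero hN G v]
    rw [show ((link G v).E 1).card = (G.E3.filter (fun t => v ∈ t)).card from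
      link_card_one hN G v]
  rw [Finset.sum_congr rfl fun v _ => hsum v]
  rw [← Finset.sum_div]
  have h2 : ∑ v : Fin (M + 3), ((G.E2.filter (fun e => v ∉ e)).card : ℝ) =
      ((M : ℝ) + 1) * G.E2.card := by
    rw [← Nat.cast_sum]
    rw [sum_filter_not_mem G.E2 G.card2]
    push_cast
    ring
  have h3 : ∑ v : Fin (M + 3), ((G.E3.filter (fun t => v ∈ t)).card : ℝ) =
      3 * G.E3.card := by
    rw [← Nat.cast_sum]
    rw [sum_filter_mem G.E3 G.card3]
    push_cast
    ring
  rw [Finset.sum_add_distrib, h2, h3]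
  -- now pure arithmetic
  have hc2 : (((M + 2).choose 2 : ℕ) : ℝ) = ((M : ℝ) + 2) * ((M : ℝ) + 1) / 2 := by
    rw [Nat.cast_choose_two]
    push_cast
    ring
  have hc2' : (((M + 3).choose 2 : ℕ) : ℝ) = ((M : ℝ) + 3) * ((M : ℝ) + 2) / 2 := by
    rw [Nat.cast_choose_two]
    push_cast
    ring
  have hc3' : (((M + 3).choose 3 : ℕ) : ℝ) = ((M : ℝ) + 3) * (((M : ℝ) + 2) * ((M : ℝ) + 1)) / 6
      := by
    have h := Nat.add_one_mul_choose_eq (M + 2) 2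
    have h' : ((M + 3 : ℕ) : ℝ) * (((M + 2).choose 2 : ℕ) : ℝ)
        = (((M + 3).choose 3 : ℕ) : ℝ) * 3 := by exact_mod_cast h
    rw [hc2] at h'
    push_cast at h'
    linarith
  unfold Graph23.density
  rw [hc2, show (M + 3).choose 2 = ((M+3).choose 2 : ℕ) from rfl]
  rw [hc2', hc3']
  have hM1 : (0:ℝ) < (M : ℝ) + 1 := by positivity
  have hM2 : (0:ℝ) < (M : ℝ) + 2 := by positivity
  have hM3 : (0:ℝ) < (M : ℝ) + 3 := by positivity
  field_simp
  ring

lemma density_le_turan {m M : ℕ} (H : ColGraph 2 2 m) (G : Graph23 (M + 3))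
    (hfree : ¬ (lift23 H).IsSubgraph G) : G.density ≤ H.turanDensityN (M + 2) := by
  obtain ⟨v, -, hv⟩ : ∃ v ∈ (Finset.univ : Finset (Fin (M + 3))),
      G.density ≤ (link G v).density := by
    apply Finset.exists_le_of_sum_le Finset.univ_nonempty
    rw [Finset.sum_const, Finset.card_univ, Fintype.card_fin, nsmul_eq_mul]
    rw [← sum_link_density G]
    push_cast
    apply le_of_eq
    ring
  refine le_trans hv (le_csSup (turanDensityN_bddAbove H (M + 2)) ?_)
  exact ⟨link G v, link_free H G hfree v, rfl⟩

end LiftProof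

theorem lift23_turan_density_le {m : ℕ} (H : ColGraph 2 2 m) :
    (∀ n : ℕ, 3 ≤ n → ∀ G : Graph23 n, ¬ (lift23 H).IsSubgraph G →
      G.density ≤ H.turanDensityN (n - 1)) ∧
    ∀ c c' : ℝ, Filter.Tendsto H.turanDensityN Filter.atTop (nhds c) →
      Filter.Tendsto (lift23 H).turanDensityN Filter.atTop (nhds c') → c' ≤ c := by
  have part1 : ∀ n : ℕ, 3 ≤ n → ∀ G : Graph23 n, ¬ (lift23 H).IsSubgraph G →
      G.density ≤ H.turanDensityN (n - 1) := by
    intro n hn G hfree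
    obtain ⟨M, rfl⟩ : ∃ M, n = M + 3 := ⟨n - 3, by omega⟩
    have : M + 3 - 1 = M + 2 := by omega
    rw [this]
    exact density_le_turan H G hfree
  refine ⟨part1, ?_⟩
  intro c c' hc hc'
  have hb : ∀ n : ℕ, 3 ≤ n →
      (lift23 H).turanDensityN n ≤ H.turanDensityN (n - 1) := by
    intro n hn
    apply Real.sSup_le _ (turanDensityN_nonneg H (n - 1))
    rintro x ⟨G, hGfree, rfl⟩
    exact part1 n hn G hGfree
  have hshift : Filter.Tendsto (fun n => H.turanDensityN (n - 1)) Filter.atTop (nhds c) :=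
    hc.comp (Filter.tendsto_sub_atTop_nat 1)
  exact le_of_tendsto_of_tendsto hc' hshift (Filter.eventually_atTop.mpr ⟨3, hb⟩)
end
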